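/- arXiv:2411.19183 — 2 statements merged into one kernel-verified Lean document; each statement's English description precedes it below -/
import Mathlib

section
/- Every minimal polygon of size zero (containing no lattice points) with denominator r is affinely unimodularly equivalent to a triangle of the form (1/r)(Δ + v), where Δ = conv((0,0),(1,0),(0,1)) and v is a lattice point in the square [0,r−1]², such that (1/r)(Δ+v) contains no points of ℤ². -/
open Set Pointwise

/-- The lattice ℤ² inside ℝ². -/
def latt : Set (ℝ × ℝ) := {p | ∃ m n : ℤ, p = ((m : ℝ), (n : ℝ))}

/-- A rational polygon with denominator `r`: a two-dimensional polytope whose vertices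
become lattice points after dilation by `r`. -/
def IsRatPolygon (r : ℕ) (P : Set (ℝ × ℝ)) : Prop :=
  (∃ V : Finset (ℝ × ℝ), (∀ v ∈ V, (r : ℝ) • v ∈ latt) ∧
    P = convexHull ℝ (V : Set (ℝ × ℝ))) ∧ (interior P).Nonempty

/-- An affine unimodular map of the plane: an integral affine map whose linear part is
in GL₂(ℤ). -/
def Unimod (f : ℝ × ℝ → ℝ × ℝ) : Prop :=
  ∃ a b c d e g : ℤ, (a * d - b * c = 1 ∨ a * d - b * c = -1) ∧
    ∀ p : ℝ × ℝ,
      f p = ((a : ℝ) * p.1 + (b : ℝ) * p.2 + (e : ℝ),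
             (c : ℝ) * p.1 + (d : ℝ) * p.2 + (g : ℝ))

/-- The points of the refined lattice `(1/r)ℤ²`. -/
def ratPts (r : ℕ) : Set (ℝ × ℝ) := {p | ∃ m n : ℤ, p = ((m : ℝ) / r, (n : ℝ) / r)}

/-- A minimal polygon of denominator `r` and size `k`: removing any vertex from its set
of `(1/r)ℤ²`-points and taking the convex hull decreases the size or the dimension. -/
def IsMinimal (r k : ℕ) (P : Set (ℝ × ℝ)) : Prop :=
  IsRatPolygon r P ∧ (P ∩ latt).ncard = k ∧
  ∀ v ∈ Set.extremePoints ℝ P,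
    ((convexHull ℝ ((P ∩ ratPts r) \ {v}) ∩ latt).ncard < k ∨
      ¬ (interior (convexHull ℝ ((P ∩ ratPts r) \ {v}))).Nonempty)

/- ### Auxiliary lemmas -/

lemma finrank_RR : Module.finrank ℝ (ℝ × ℝ) = 2 := by
  simp [Module.finrank_prod]

lemma vectorSpan_top_of_not_collinear {s : Set (ℝ×ℝ)} (h : ¬ Collinear ℝ s) :
    vectorSpan ℝ s = ⊤ := by
  apply Submodule.eq_top_of_finrank_eq
  rw [finrank_RR]
  have h1 : ¬ Module.finrank ℝ (vectorSpan ℝ s) ≤ 1 := fun hle => h (collinear_iff_finrank_le_one.2 hle)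
  have h2 : Module.finrank ℝ (vectorSpan ℝ s) ≤ 2 := by
    have := Submodule.finrank_le (vectorSpan ℝ s)
    rwa [finrank_RR] at this
  omega

lemma not_collinear_of_affineSpan_top {s : Set (ℝ×ℝ)} (h : affineSpan ℝ s = ⊤) :
    ¬ Collinear ℝ s := by
  intro hc
  have h1 := collinear_iff_finrank_le_one.1 hc
  have h2 : vectorSpan ℝ s = ⊤ := AffineSubspace.vectorSpan_eq_top_of_affineSpan_eq_top ℝ _ _ h
  rw [h2] at h1
  rw [finrank_top, finrank_RR] at h1
  omega

lemma interior_hull3_nonempty {a b c : ℝ×ℝ} (h : ¬Collinear ℝ ({a,b,c} : Set (ℝ×ℝ)))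
    {S : Set (ℝ×ℝ)} (hS : ({a,b,c} : Set (ℝ×ℝ)) ⊆ S) :
    (interior (convexHull ℝ S)).Nonempty := by
  have h1 : (interior (convexHull ℝ ({a,b,c} : Set (ℝ×ℝ)))).Nonempty := by
    rw [interior_convexHull_nonempty_iff_affineSpan_eq_top]
    rw [AffineSubspace.affineSpan_eq_top_iff_vectorSpan_eq_top_of_nonempty ℝ _ _ (by simp)]
    exact vectorSpan_top_of_not_collinear h
  exact h1.mono (interior_mono (convexHull_mono hS))

lemma extreme_not_collinear {P : Set (ℝ×ℝ)} {a b c : ℝ×ℝ}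
    (ha : a ∈ Set.extremePoints ℝ P) (hb : b ∈ Set.extremePoints ℝ P)
    (hc : c ∈ Set.extremePoints ℝ P) (hab : a ≠ b) (hac : a ≠ c) (hbc : b ≠ c) :
    ¬ Collinear ℝ ({a,b,c} : Set (ℝ×ℝ)) := by
  have haP := extremePoints_subset ha
  have hbP := extremePoints_subset hb
  have hcP := extremePoints_subset hc
  intro hcol
  rcases hcol.wbtw_or_wbtw_or_wbtw with h|h|h
  · exact hab (hb.2 haP hcP (mem_openSegment_of_ne_left_right hab hbc.symm h.mem_segment))
  · exact hbc (hc.2 hbP haP (mem_openSegment_of_ne_left_right hbc hac h.mem_segment))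
  · exact hac.symm (ha.2 hcP hbP (mem_openSegment_of_ne_left_right hac.symm hab.symm h.mem_segment))

lemma combo3_mem {a b c : ℝ×ℝ} {α β γ : ℝ} (hα : 0 ≤ α) (hβ : 0 ≤ β) (hγ : 0 ≤ γ)
    (hsum : α + β + γ = 1) : α•a + β•b + γ•c ∈ convexHull ℝ ({a,b,c} : Set (ℝ×ℝ)) := by
  have hva : a ∈ convexHull ℝ ({a,b,c} : Set (ℝ×ℝ)) := subset_convexHull _ _ (by simp)
  have hvb : b ∈ convexHull ℝ ({a,b,c} : Set (ℝ×ℝ)) := subset_convexHull _ _ (by simp)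
  have hvc : c ∈ convexHull ℝ ({a,b,c} : Set (ℝ×ℝ)) := subset_convexHull _ _ (by simp)
  by_cases h : β + γ = 0
  · have hβ0 : β = 0 := by linarith
    have hγ0 : γ = 0 := by linarith
    have hα1 : α = 1 := by linarith
    simpa [hβ0, hγ0, hα1] using hva
  · have hpos : 0 < β + γ := lt_of_le_of_ne (by linarith) (Ne.symm h)
    have hq : (β/(β+γ))•b + (γ/(β+γ))•c ∈ convexHull ℝ ({a,b,c} : Set (ℝ×ℝ)) :=
      (convex_convexHull ℝ _) hvb hvc (div_nonneg hβ hpos.le) (div_nonneg hγ hpos.le)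
        (by field_simp)
    have hfin := (convex_convexHull ℝ _) hva hq hα hpos.le (by linarith)
    have e1 : (β+γ) * (β/(β+γ)) = β := by field_simp
    have e2 : (β+γ) * (γ/(β+γ)) = γ := by field_simp
    rwa [smul_add, smul_smul, smul_smul, e1, e2, ← add_assoc] at hfin

lemma collinear_of_det {a b c : ℝ×ℝ}
    (h : (b.1-a.1)*(c.2-a.2) - (b.2-a.2)*(c.1-a.1) = 0) :
    Collinear ℝ ({a,b,c} : Set (ℝ×ℝ)) := by
  rcases eq_or_ne b a with hba | hba
  · subst hba
    exact Collinear.subset (by intro x hx; simp at hx; rcases hx with h|h|h <;> simp [h])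
      (collinear_pair ℝ b c)
  · rw [collinear_iff_of_mem (Set.mem_insert a _)]
    refine ⟨b - a, fun p hp => ?_⟩
    simp only [Set.mem_insert_iff, Set.mem_singleton_iff] at hp
    rcases hp with rfl | rfl | rfl
    · exact ⟨0, by simp⟩
    · exact ⟨1, by simp⟩
    · rcases eq_or_ne (b.1 - a.1) 0 with h1 | h1
      · have h2 : b.2 - a.2 ≠ 0 := by
          intro h2; apply hba; apply Prod.ext <;> [skip; skip] <;>
            [exact sub_eq_zero.1 h1; exact sub_eq_zero.1 h2]
        refine ⟨(p.2 - a.2)/(b.2 - a.2), ?_⟩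
        have hc1 : p.1 - a.1 = 0 := by
          have := h; rw [h1] at this
          have h3 : (b.2 - a.2) * (p.1 - a.1) = 0 := by linarith
          rcases mul_eq_zero.1 h3 with h4 | h4; · exact absurd h4 h2
          · exact h4
        apply Prod.ext
        · show p.1 = (p.2 - a.2)/(b.2-a.2) * (b.1 - a.1) + a.1
          rw [h1]; simp; linarith
        · show p.2 = (p.2 - a.2)/(b.2-a.2) * (b.2 - a.2) + a.2
          field_simp
          ring
      · refine ⟨(p.1 - a.1)/(b.1 - a.1), ?_⟩
        apply Prod.ext
        · show p.1 = (p.1 - a.1)/(b.1-a.1) * (b.1 - a.1) + a.1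
          field_simp
          ring
        · show p.2 = (p.1 - a.1)/(b.1-a.1) * (b.2 - a.2) + a.2
          rw [div_mul_eq_mul_div, eq_comm, div_add' _ _ _ h1, div_eq_iff h1]
          nlinarith [h]

lemma int_cancel {u1 u2 w1 w2 s t : ℤ} (hD0 : u1*w2-u2*w1 ≠ 0)
    (h1 : s*u1 + t*w1 = 0) (h2 : s*u2 + t*w2 = 0) : s = 0 ∧ t = 0 := by
  constructor
  · have hs : s * (u1*w2-u2*w1) = 0 := by linear_combination w2*h1 - w1*h2
    exact (mul_eq_zero.1 hs).resolve_right hD0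
  · have ht : t * (u1*w2-u2*w1) = 0 := by linear_combination u1*h2 - u2*h1
    exact (mul_eq_zero.1 ht).resolve_right hD0

lemma image_affine (A B C D E G : ℝ) (S : Set (ℝ×ℝ)) :
    (fun p : ℝ×ℝ => (A*p.1 + B*p.2 + E, C*p.1 + D*p.2 + G)) '' (convexHull ℝ S) =
    convexHull ℝ ((fun p : ℝ×ℝ => (A*p.1+B*p.2+E, C*p.1+D*p.2+G)) '' S) := by
  let L : (ℝ×ℝ) →ₗ[ℝ] (ℝ×ℝ) :=
    { toFun := fun p => (A*p.1 + B*p.2, C*p.1 + D*p.2)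
      map_add' := by intro p q; apply Prod.ext <;> simp <;> ring
      map_smul' := by intro c p; apply Prod.ext <;> simp <;> ring }
  let F : (ℝ×ℝ) →ᵃ[ℝ] (ℝ×ℝ) :=
    { toFun := fun p => (A*p.1 + B*p.2 + E, C*p.1 + D*p.2 + G)
      linear := L
      map_vadd' := by
        intro p v; apply Prod.ext <;> simp [L] <;> ring }
  exact F.image_convexHull S

lemma subsingleton_collinear {s : Set (ℝ×ℝ)} (h : s.Subsingleton) : Collinear ℝ s := by
  rcases h.eq_empty_or_singleton with rfl | ⟨x, rfl⟩
  · exact collinear_empty ℝ _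
  · exact collinear_singleton ℝ _

lemma collinear_line (x y : ℝ×ℝ) :
    Collinear ℝ ((line[ℝ, x, y] : AffineSubspace ℝ (ℝ×ℝ)) : Set (ℝ×ℝ)) := by
  show Module.rank ℝ (vectorSpan ℝ _) ≤ 1
  rw [← direction_affineSpan, AffineSubspace.affineSpan_coe, direction_affineSpan]
  exact collinear_pair ℝ x y
lemma det_pm_one (r : ℕ) (hr : 0 < r) (P : Set (ℝ×ℝ)) (a1 a2 b1 b2 c1 c2 : ℤ)
    (hconv : convexHull ℝ {(((a1:ℝ))/r,((a2:ℝ))/r), (((b1:ℝ))/r,((b2:ℝ))/r),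
      (((c1:ℝ))/r,((c2:ℝ))/r)} ⊆ P)
    (hrat : P ∩ ratPts r ⊆ {(((a1:ℝ))/r,((a2:ℝ))/r), (((b1:ℝ))/r,((b2:ℝ))/r),
      (((c1:ℝ))/r,((c2:ℝ))/r)})
    (hD0 : (b1-a1)*(c2-a2) - (b2-a2)*(c1-a1) ≠ 0) :
    (b1-a1)*(c2-a2) - (b2-a2)*(c1-a1) = 1 ∨ (b1-a1)*(c2-a2) - (b2-a2)*(c1-a1) = -1 := by
  set u1 : ℤ := b1 - a1 with hu1
  set u2 : ℤ := b2 - a2 with hu2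
  set w1 : ℤ := c1 - a1 with hw1
  set w2 : ℤ := c2 - a2 with hw2
  set D : ℤ := u1*w2 - u2*w1 with hD
  by_contra hcon
  push_neg at hcon
  obtain ⟨hcon1, hcon2⟩ := hcon
  have hm2 : 2 ≤ (D.natAbs : ℤ) := by
    rcases Int.natAbs_eq D with h | h <;> omega
  set m : ℤ := (D.natAbs : ℤ) with hm
  have hm0 : 0 < m := by omega
  have hDm : D ∣ m := Int.dvd_natAbs.2 dvd_rfl
  have hABex : ∃ A B z1 z2 : ℤ, ¬(D ∣ A ∧ D ∣ B) ∧ A*u1 + B*w1 = D*z1 ∧ A*u2 + B*w2 = D*z2 := by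
    by_cases hc : D ∣ w2 ∧ D ∣ u2
    · have hc2 : ¬(D ∣ w1 ∧ D ∣ u1) := by
        rintro ⟨hw1d, hu1d⟩
        have h1' : D*D ∣ u1*w2 := mul_dvd_mul hu1d hc.1
        have h2' : D*D ∣ u2*w1 := mul_dvd_mul hc.2 hw1d
        have h3 : D*D ∣ D := by
          have h := dvd_sub h1' h2'
          rwa [← hD] at h
        have h4 : (D*D).natAbs ∣ D.natAbs := Int.natAbs_dvd_natAbs.2 h3
        have h5 : (D*D).natAbs ≤ D.natAbs := Nat.le_of_dvd (Int.natAbs_pos.2 hD0) h4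
        rw [Int.natAbs_mul] at h5
        have h6 : 2 ≤ D.natAbs := by omega
        have h7 : 2*D.natAbs ≤ D.natAbs*D.natAbs := Nat.mul_le_mul_right _ h6
        omega
      refine ⟨-w1, u1, 0, 1, ?_, by ring, by rw [hD]; ring⟩
      rw [dvd_neg]
      exact hc2
    · refine ⟨w2, -u2, 1, 0, ?_, by rw [hD]; ring, by ring⟩
      rw [dvd_neg]
      exact hc
  obtain ⟨A, B, z1, z2, hAB, hid1, hid2⟩ := hABex
  set a0 : ℤ := A % m with ha0
  set b0 : ℤ := B % m with hb0
  have ha0n : 0 ≤ a0 := Int.emod_nonneg A (by omega)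
  have hb0n : 0 ≤ b0 := Int.emod_nonneg B (by omega)
  have ha0l : a0 < m := Int.emod_lt_of_pos A hm0
  have hb0l : b0 < m := Int.emod_lt_of_pos B hm0
  have hAa0 : D ∣ (A - a0) := by
    refine dvd_trans hDm ?_
    rw [ha0, Int.emod_def]
    exact ⟨A / m, by ring⟩
  have hBb0 : D ∣ (B - b0) := by
    refine dvd_trans hDm ?_
    rw [hb0, Int.emod_def]
    exact ⟨B / m, by ring⟩
  have hab0 : ¬(a0 = 0 ∧ b0 = 0) := by
    rintro ⟨h1, h2⟩
    exact hAB ⟨by simpa [h1] using hAa0, by simpa [h2] using hBb0⟩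
  have hdvd1 : m ∣ a0*u1 + b0*w1 := by
    refine Int.natAbs_dvd.2 ?_
    have h : a0*u1 + b0*w1 = D*z1 - ((A - a0)*u1 + (B - b0)*w1) := by linear_combination hid1
    rw [h]
    exact dvd_sub (Dvd.intro _ rfl) (dvd_add (Dvd.dvd.mul_right hAa0 _) (Dvd.dvd.mul_right hBb0 _))
  have hdvd2 : m ∣ a0*u2 + b0*w2 := by
    refine Int.natAbs_dvd.2 ?_
    have h : a0*u2 + b0*w2 = D*z2 - ((A - a0)*u2 + (B - b0)*w2) := by linear_combination hid2
    rw [h]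
    exact dvd_sub (Dvd.intro _ rfl) (dvd_add (Dvd.dvd.mul_right hAa0 _) (Dvd.dvd.mul_right hBb0 _))
  obtain ⟨g1, hg1⟩ := hdvd1
  obtain ⟨g2, hg2⟩ := hdvd2
  have hrR : (r:ℝ) ≠ 0 := Nat.cast_ne_zero.2 hr.ne'
  have hmR : (m:ℝ) ≠ 0 := Int.cast_ne_zero.2 hm0.ne'
  have hmRpos : (0:ℝ) < m := by exact_mod_cast hm0
  have hg1R : (a0:ℝ)*((b1:ℝ)-a1) + (b0:ℝ)*((c1:ℝ)-a1) = (m:ℝ)*g1 := by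
    have h := hg1
    rw [hu1, hw1] at h
    exact_mod_cast h
  have hg2R : (a0:ℝ)*((b2:ℝ)-a2) + (b0:ℝ)*((c2:ℝ)-a2) = (m:ℝ)*g2 := by
    have h := hg2
    rw [hu2, hw2] at h
    exact_mod_cast h
  have hD0' : u1*w2 - u2*w1 ≠ 0 := by rw [← hD]; exact hD0
  have cast_eq : ∀ x y : ℤ, ((x:ℝ))/r = ((y:ℝ))/r → x = y := by
    intro x y h
    field_simp at h
    exact_mod_cast h
  by_cases hcase : a0 + b0 ≤ m
  · set p : ℝ×ℝ := (((a1+g1 : ℤ):ℝ)/r, ((a2+g2 : ℤ):ℝ)/r) with hp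
    have hprat : p ∈ ratPts r := ⟨a1+g1, a2+g2, rfl⟩
    have hα : (0:ℝ) ≤ ((m - a0 - b0 : ℤ):ℝ)/m :=
      div_nonneg (by exact_mod_cast (by omega : (0:ℤ) ≤ m - a0 - b0)) hmRpos.le
    have hβ : (0:ℝ) ≤ ((a0:ℝ))/m := div_nonneg (by exact_mod_cast ha0n) hmRpos.le
    have hγ : (0:ℝ) ≤ ((b0:ℝ))/m := div_nonneg (by exact_mod_cast hb0n) hmRpos.le
    have hsum : ((m - a0 - b0 : ℤ):ℝ)/m + ((a0:ℝ))/m + ((b0:ℝ))/m = 1 := by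
      have h : ((m - a0 - b0 : ℤ):ℝ) + (a0:ℝ) + (b0:ℝ) = (m:ℝ) := by push_cast; ring
      rw [← add_div, ← add_div, h, div_self hmR]
    have hcomb := combo3_mem (a := (((a1:ℝ))/r,((a2:ℝ))/r)) (b := (((b1:ℝ))/r,((b2:ℝ))/r))
      (c := (((c1:ℝ))/r,((c2:ℝ))/r)) hα hβ hγ hsum
    have hpe : (((m - a0 - b0 : ℤ):ℝ)/m)•((((a1:ℝ))/r,((a2:ℝ))/r) : ℝ×ℝ)
        + (((a0:ℝ))/m)•((((b1:ℝ))/r,((b2:ℝ))/r) : ℝ×ℝ)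
        + (((b0:ℝ))/m)•((((c1:ℝ))/r,((c2:ℝ))/r) : ℝ×ℝ) = p := by
      apply Prod.ext
      · show (((m - a0 - b0 : ℤ):ℝ)/m)*((a1:ℝ)/r) + (((a0:ℝ))/m)*((b1:ℝ)/r)
            + (((b0:ℝ))/m)*((c1:ℝ)/r) = ((a1+g1 : ℤ):ℝ)/r
        push_cast
        field_simp
        linear_combination hg1R
      · show (((m - a0 - b0 : ℤ):ℝ)/m)*((a2:ℝ)/r) + (((a0:ℝ))/m)*((b2:ℝ)/r)
            + (((b0:ℝ))/m)*((c2:ℝ)/r) = ((a2+g2 : ℤ):ℝ)/r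
        push_cast
        field_simp
        linear_combination hg2R
    rw [hpe] at hcomb
    have hpmem := hrat ⟨hconv hcomb, hprat⟩
    simp only [Set.mem_insert_iff, Set.mem_singleton_iff, hp, Prod.mk.injEq] at hpmem
    rcases hpmem with ⟨h1, h2⟩ | ⟨h1, h2⟩ | ⟨h1, h2⟩
    · have e1 : a1 + g1 = a1 := cast_eq _ _ h1
      have e2 : a2 + g2 = a2 := cast_eq _ _ h2
      have hq1 : a0*u1 + b0*w1 = 0 := by rw [hg1, (by omega : g1 = 0), mul_zero]
      have hq2 : a0*u2 + b0*w2 = 0 := by rw [hg2, (by omega : g2 = 0), mul_zero]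
      exact hab0 (int_cancel hD0' hq1 hq2)
    · have e1 : a1 + g1 = b1 := cast_eq _ _ h1
      have e2 : a2 + g2 = b2 := cast_eq _ _ h2
      have hgu1 : g1 = u1 := by omega
      have hgu2 : g2 = u2 := by omega
      have hq1 : (a0 - m)*u1 + b0*w1 = 0 := by linear_combination hg1 + m*hgu1
      have hq2 : (a0 - m)*u2 + b0*w2 = 0 := by linear_combination hg2 + m*hgu2
      have := int_cancel hD0' hq1 hq2
      omega
    · have e1 : a1 + g1 = c1 := cast_eq _ _ h1
      have e2 : a2 + g2 = c2 := cast_eq _ _ h2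
      have hgw1 : g1 = w1 := by omega
      have hgw2 : g2 = w2 := by omega
      have hq1 : a0*u1 + (b0 - m)*w1 = 0 := by linear_combination hg1 + m*hgw1
      have hq2 : a0*u2 + (b0 - m)*w2 = 0 := by linear_combination hg2 + m*hgw2
      have := int_cancel hD0' hq1 hq2
      omega
  · set p : ℝ×ℝ := (((b1+c1-a1-g1 : ℤ):ℝ)/r, ((b2+c2-a2-g2 : ℤ):ℝ)/r) with hp
    have hprat : p ∈ ratPts r := ⟨b1+c1-a1-g1, b2+c2-a2-g2, rfl⟩
    have hα : (0:ℝ) ≤ ((a0 + b0 - m : ℤ):ℝ)/m :=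
      div_nonneg (by exact_mod_cast (by omega : (0:ℤ) ≤ a0 + b0 - m)) hmRpos.le
    have hβ : (0:ℝ) ≤ ((m - a0 : ℤ):ℝ)/m :=
      div_nonneg (by exact_mod_cast (by omega : (0:ℤ) ≤ m - a0)) hmRpos.le
    have hγ : (0:ℝ) ≤ ((m - b0 : ℤ):ℝ)/m :=
      div_nonneg (by exact_mod_cast (by omega : (0:ℤ) ≤ m - b0)) hmRpos.le
    have hsum : ((a0 + b0 - m : ℤ):ℝ)/m + ((m - a0 : ℤ):ℝ)/m + ((m - b0 : ℤ):ℝ)/m = 1 := by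
      have h : ((a0 + b0 - m : ℤ):ℝ) + ((m - a0 : ℤ):ℝ) + ((m - b0 : ℤ):ℝ) = (m:ℝ) := by
        push_cast; ring
      rw [← add_div, ← add_div, h, div_self hmR]
    have hcomb := combo3_mem (a := (((a1:ℝ))/r,((a2:ℝ))/r)) (b := (((b1:ℝ))/r,((b2:ℝ))/r))
      (c := (((c1:ℝ))/r,((c2:ℝ))/r)) hα hβ hγ hsum
    have hpe : (((a0 + b0 - m : ℤ):ℝ)/m)•((((a1:ℝ))/r,((a2:ℝ))/r) : ℝ×ℝ)
        + (((m - a0 : ℤ):ℝ)/m)•((((b1:ℝ))/r,((b2:ℝ))/r) : ℝ×ℝ)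
        + (((m - b0 : ℤ):ℝ)/m)•((((c1:ℝ))/r,((c2:ℝ))/r) : ℝ×ℝ) = p := by
      apply Prod.ext
      · show (((a0 + b0 - m : ℤ):ℝ)/m)*((a1:ℝ)/r) + (((m - a0 : ℤ):ℝ)/m)*((b1:ℝ)/r)
            + (((m - b0 : ℤ):ℝ)/m)*((c1:ℝ)/r) = ((b1+c1-a1-g1 : ℤ):ℝ)/r
        push_cast
        field_simp
        linear_combination (-1:ℝ) * hg1R
      · show (((a0 + b0 - m : ℤ):ℝ)/m)*((a2:ℝ)/r) + (((m - a0 : ℤ):ℝ)/m)*((b2:ℝ)/r)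
            + (((m - b0 : ℤ):ℝ)/m)*((c2:ℝ)/r) = ((b2+c2-a2-g2 : ℤ):ℝ)/r
        push_cast
        field_simp
        linear_combination (-1:ℝ) * hg2R
    rw [hpe] at hcomb
    have hpmem := hrat ⟨hconv hcomb, hprat⟩
    simp only [Set.mem_insert_iff, Set.mem_singleton_iff, hp, Prod.mk.injEq] at hpmem
    rcases hpmem with ⟨h1, h2⟩ | ⟨h1, h2⟩ | ⟨h1, h2⟩
    · have e1 : b1+c1-a1-g1 = a1 := cast_eq _ _ h1
      have e2 : b2+c2-a2-g2 = a2 := cast_eq _ _ h2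
      have hgu1 : g1 = u1 + w1 := by omega
      have hgu2 : g2 = u2 + w2 := by omega
      have hq1 : (a0 - m)*u1 + (b0 - m)*w1 = 0 := by linear_combination hg1 + m*hgu1
      have hq2 : (a0 - m)*u2 + (b0 - m)*w2 = 0 := by linear_combination hg2 + m*hgu2
      have := int_cancel hD0' hq1 hq2
      omega
    · have e1 : b1+c1-a1-g1 = b1 := cast_eq _ _ h1
      have e2 : b2+c2-a2-g2 = b2 := cast_eq _ _ h2
      have hgw1 : g1 = w1 := by omega
      have hgw2 : g2 = w2 := by omega
      have hq1 : a0*u1 + (b0 - m)*w1 = 0 := by linear_combination hg1 + m*hgw1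
      have hq2 : a0*u2 + (b0 - m)*w2 = 0 := by linear_combination hg2 + m*hgw2
      have := int_cancel hD0' hq1 hq2
      omega
    · have e1 : b1+c1-a1-g1 = c1 := cast_eq _ _ h1
      have e2 : b2+c2-a2-g2 = c2 := cast_eq _ _ h2
      have hgu1 : g1 = u1 := by omega
      have hgu2 : g2 = u2 := by omega
      have hq1 : (a0 - m)*u1 + b0*w1 = 0 := by linear_combination hg1 + m*hgu1
      have hq2 : (a0 - m)*u2 + b0*w2 = 0 := by linear_combination hg2 + m*hgu2
      have := int_cancel hD0' hq1 hq2
      omega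

lemma latt_subset_ratPts {r : ℕ} (hr : 0 < r) : latt ⊆ ratPts r := by
  rintro p ⟨m, n, rfl⟩
  refine ⟨m * r, n * r, ?_⟩
  have hrR : (r:ℝ) ≠ 0 := Nat.cast_ne_zero.2 hr.ne'
  apply Prod.ext <;> · show _ = _ / (r:ℝ); push_cast; field_simp

/-- every minimal polygon of size zero and denominator `r` is equivalent to
a lattice-point-free triangle `(1/r)(Δ + v)` with `Δ = conv((0,0),(1,0),(0,1))` and
`v ∈ ℤ² ∩ [0,r−1]²`. -/
theorem stmt_16 (r : ℕ) (hr : 0 < r) (P : Set (ℝ × ℝ)) (hmin : IsMinimal r 0 P) :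
    ∃ v : ℤ × ℤ, 0 ≤ v.1 ∧ v.1 ≤ (r : ℤ) - 1 ∧ 0 ≤ v.2 ∧ v.2 ≤ (r : ℤ) - 1 ∧
      (convexHull ℝ {(((v.1 : ℝ)) / r, ((v.2 : ℝ)) / r),
          (((v.1 : ℝ) + 1) / r, ((v.2 : ℝ)) / r),
          (((v.1 : ℝ)) / r, ((v.2 : ℝ) + 1) / r)} ∩ latt = ∅) ∧
      ∃ f : ℝ × ℝ → ℝ × ℝ, Unimod f ∧
        f '' P = convexHull ℝ {(((v.1 : ℝ)) / r, ((v.2 : ℝ)) / r),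
          (((v.1 : ℝ) + 1) / r, ((v.2 : ℝ)) / r),
          (((v.1 : ℝ)) / r, ((v.2 : ℝ) + 1) / r)} := by
  obtain ⟨⟨⟨V, hV, hPV⟩, hint⟩, hcard, hmin3⟩ := hmin
  have hrR : (r:ℝ) ≠ 0 := Nat.cast_ne_zero.2 hr.ne'
  have hVrat : (V : Set (ℝ×ℝ)) ⊆ ratPts r := by
    intro v hv
    obtain ⟨mm, nn, hmn⟩ := hV v hv
    refine ⟨mm, nn, ?_⟩
    have h1 : (r:ℝ) * v.1 = mm := by have := congrArg Prod.fst hmn; simpa using this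
    have h2 : (r:ℝ) * v.2 = nn := by have := congrArg Prod.snd hmn; simpa using this
    apply Prod.ext
    · show v.1 = (mm:ℝ)/r
      field_simp
      linarith
    · show v.2 = (nn:ℝ)/r
      field_simp
      linarith
  have hPconv : Convex ℝ P := hPV ▸ convex_convexHull ℝ _
  have hVP : (V : Set (ℝ×ℝ)) ⊆ P := hPV ▸ subset_convexHull ℝ _
  have hcomp : IsCompact P := hPV ▸ V.finite_toSet.isCompact_convexHull (𝕜 := ℝ)
  have hEV : P.extremePoints ℝ ⊆ (V : Set (ℝ×ℝ)) := by
    rw [hPV]; exact extremePoints_convexHull_subset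
  have hEfin : (P.extremePoints ℝ).Finite := V.finite_toSet.subset hEV
  have hPE : P = convexHull ℝ (P.extremePoints ℝ) := by
    conv_lhs => rw [← closure_convexHull_extremePoints hcomp hPconv]
    exact (hEfin.isClosed_convexHull (𝕜 := ℝ)).closure_eq
  have hspanE : affineSpan ℝ (P.extremePoints ℝ) = ⊤ := by
    have hs := hPconv.interior_nonempty_iff_affineSpan_eq_top.1 hint
    rw [hPE, affineSpan_convexHull] at hs
    exact hs
  have hnotcolE := not_collinear_of_affineSpan_top hspanE
  have hEnt : (P.extremePoints ℝ).Nontrivial :=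
    Set.not_subsingleton_iff.1 (fun h => hnotcolE (subsingleton_collinear h))
  obtain ⟨a, haE, b, hbE, hab⟩ := hEnt
  have hex : ∃ c ∈ P.extremePoints ℝ, ¬ Collinear ℝ ({a,b,c} : Set (ℝ×ℝ)) := by
    by_contra h
    push_neg at h
    apply hnotcolE
    refine Collinear.subset ?_ (collinear_line a b)
    intro p hp
    exact (h p hp).mem_affineSpan_of_mem_of_ne (by simp) (by simp) (by simp) hab
  obtain ⟨c, hcE, hnab⟩ := hex
  have hac : a ≠ c := by
    rintro rfl
    exact hnab (Collinear.subset (by intro x hx; simp at hx ⊢; tauto)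
      (collinear_pair ℝ a b))
  have hbc : b ≠ c := by
    rintro rfl
    exact hnab (Collinear.subset (by intro x hx; simp at hx ⊢; tauto)
      (collinear_pair ℝ a b))
  have haP : a ∈ P := extremePoints_subset haE
  have hbP : b ∈ P := extremePoints_subset hbE
  have hcP : c ∈ P := extremePoints_subset hcE
  have haR : a ∈ ratPts r := hVrat (hEV haE)
  have hbR : b ∈ ratPts r := hVrat (hEV hbE)
  have hcR : c ∈ ratPts r := hVrat (hEV hcE)
  -- the rational points of P are exactly a, b, c
  have hkey : P ∩ ratPts r ⊆ ({a,b,c} : Set (ℝ×ℝ)) := by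
    rintro d ⟨hdP, hdR⟩
    by_contra hd3
    simp only [Set.mem_insert_iff, Set.mem_singleton_iff] at hd3
    push_neg at hd3
    obtain ⟨hda, hdb, hdc⟩ := hd3
    have htri : ¬Collinear ℝ ({b,c,d} : Set (ℝ×ℝ)) ∨ ¬Collinear ℝ ({a,c,d} : Set (ℝ×ℝ)) ∨
        ¬Collinear ℝ ({a,b,d} : Set (ℝ×ℝ)) := by
      by_contra h
      push_neg at h
      obtain ⟨h1, h2, h3⟩ := h
      apply hnab
      have hb' : b ∈ line[ℝ, a, d] :=
        h3.mem_affineSpan_of_mem_of_ne (by simp) (by simp) (by simp) (Ne.symm hda)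
      have hc' : c ∈ line[ℝ, a, d] :=
        h2.mem_affineSpan_of_mem_of_ne (by simp) (by simp) (by simp) (Ne.symm hda)
      have ha' : a ∈ line[ℝ, a, d] := left_mem_affineSpan_pair ℝ a d
      exact Collinear.subset
        (by intro x hx; simp at hx; rcases hx with rfl|rfl|rfl <;> assumption)
        (collinear_line a d)
    rcases htri with h|h|h
    · rcases hmin3 a haE with hlt | hno
      · omega
      · refine hno (interior_hull3_nonempty h ?_)
        intro x hx
        simp only [Set.mem_insert_iff, Set.mem_singleton_iff] at hx
        rcases hx with rfl|rfl|rfl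
        · exact ⟨⟨hbP, hbR⟩, by simp [hab.symm]⟩
        · exact ⟨⟨hcP, hcR⟩, by simp [hac.symm]⟩
        · exact ⟨⟨hdP, hdR⟩, by simp [hda]⟩
    · rcases hmin3 b hbE with hlt | hno
      · omega
      · refine hno (interior_hull3_nonempty h ?_)
        intro x hx
        simp only [Set.mem_insert_iff, Set.mem_singleton_iff] at hx
        rcases hx with rfl|rfl|rfl
        · exact ⟨⟨haP, haR⟩, by simp [hab]⟩
        · exact ⟨⟨hcP, hcR⟩, by simp [hbc.symm]⟩
        · exact ⟨⟨hdP, hdR⟩, by simp [hdb]⟩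
    · rcases hmin3 c hcE with hlt | hno
      · omega
      · refine hno (interior_hull3_nonempty h ?_)
        intro x hx
        simp only [Set.mem_insert_iff, Set.mem_singleton_iff] at hx
        rcases hx with rfl|rfl|rfl
        · exact ⟨⟨haP, haR⟩, by simp [hac]⟩
        · exact ⟨⟨hbP, hbR⟩, by simp [hbc]⟩
        · exact ⟨⟨hdP, hdR⟩, by simp [hdc]⟩
  have habc_sub : ({a,b,c} : Set (ℝ×ℝ)) ⊆ P ∩ ratPts r := by
    intro x hx
    simp only [Set.mem_insert_iff, Set.mem_singleton_iff] at hx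
    rcases hx with rfl|rfl|rfl
    exacts [⟨haP, haR⟩, ⟨hbP, hbR⟩, ⟨hcP, hcR⟩]
  have hPrateq : P ∩ ratPts r = ({a,b,c} : Set (ℝ×ℝ)) := Subset.antisymm hkey habc_sub
  have hPabc : P = convexHull ℝ ({a,b,c} : Set (ℝ×ℝ)) := by
    apply Subset.antisymm
    · calc P = convexHull ℝ (V : Set (ℝ×ℝ)) := hPV
        _ ⊆ convexHull ℝ (P ∩ ratPts r) := convexHull_mono (fun v hv => ⟨hVP hv, hVrat hv⟩)
        _ = convexHull ℝ ({a,b,c} : Set (ℝ×ℝ)) := by rw [hPrateq]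
    · exact convexHull_min (by intro x hx; simp at hx; rcases hx with rfl|rfl|rfl <;> assumption)
        hPconv
  -- P contains no lattice points at all
  have hPlatt : P ∩ latt = ∅ := by
    have hfin : (P ∩ latt).Finite :=
      (((Set.finite_singleton c).insert b).insert a).subset
        (fun x ⟨hx1, hx2⟩ => hkey ⟨hx1, latt_subset_ratPts hr hx2⟩)
    exact (Set.ncard_eq_zero hfin).1 hcard
  -- introduce integer coordinates
  obtain ⟨a1, a2, ha_eq⟩ := haR
  obtain ⟨b1, b2, hb_eq⟩ := hbR
  obtain ⟨c1, c2, hc_eq⟩ := hcR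
  subst ha_eq hb_eq hc_eq
  -- the integer determinant is nonzero
  have hdetR : ((b1:ℝ)/r - (a1:ℝ)/r)*((c2:ℝ)/r - (a2:ℝ)/r)
      - ((b2:ℝ)/r - (a2:ℝ)/r)*((c1:ℝ)/r - (a1:ℝ)/r) ≠ 0 := by
    intro h
    exact hnab (collinear_of_det h)
  have hD0 : (b1-a1)*(c2-a2) - (b2-a2)*(c1-a1) ≠ 0 := by
    intro h
    apply hdetR
    have hR : ((b1:ℝ)-a1)*((c2:ℝ)-a2) - ((b2:ℝ)-a2)*((c1:ℝ)-a1) = 0 := by exact_mod_cast h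
    field_simp
    linear_combination hR
  have hDpm := det_pm_one r hr P a1 a2 b1 b2 c1 c2 hPabc.symm.subset hPrateq.subset hD0
  -- final assembly
  obtain ⟨Dt, hDt⟩ : ∃ x : ℤ, x = (b1-a1)*(c2-a2) - (b2-a2)*(c1-a1) := ⟨_, rfl⟩
  have hDpm' : Dt = 1 ∨ Dt = -1 := by rw [hDt]; exact hDpm
  have hDsq : Dt * Dt = 1 := by rcases hDpm' with h|h <;> rw [h] <;> norm_num
  obtain ⟨na, hna⟩ : ∃ x : ℤ, x = Dt*(c2-a2) := ⟨_, rfl⟩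
  obtain ⟨nb, hnb⟩ : ∃ x : ℤ, x = -(Dt*(c1-a1)) := ⟨_, rfl⟩
  obtain ⟨nc, hnc⟩ : ∃ x : ℤ, x = -(Dt*(b2-a2)) := ⟨_, rfl⟩
  obtain ⟨nd, hnd⟩ : ∃ x : ℤ, x = Dt*(b1-a1) := ⟨_, rfl⟩
  obtain ⟨m1, hm1⟩ : ∃ x : ℤ, x = Dt*((c2-a2)*a1 - (c1-a1)*a2) := ⟨_, rfl⟩
  obtain ⟨n1, hn1⟩ : ∃ x : ℤ, x = Dt*((b1-a1)*a2 - (b2-a2)*a1) := ⟨_, rfl⟩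
  obtain ⟨e, he⟩ : ∃ x : ℤ, x = -(m1 / (r:ℤ)) := ⟨_, rfl⟩
  obtain ⟨g, hg⟩ : ∃ x : ℤ, x = -(n1 / (r:ℤ)) := ⟨_, rfl⟩
  obtain ⟨v1, hv1⟩ : ∃ x : ℤ, x = m1 % (r:ℤ) := ⟨_, rfl⟩
  obtain ⟨v2, hv2⟩ : ∃ x : ℤ, x = n1 % (r:ℤ) := ⟨_, rfl⟩
  have hrZ : (0:ℤ) < (r:ℤ) := by exact_mod_cast hr
  have hv1e : v1 = m1 + (r:ℤ)*e := by rw [hv1, he, Int.emod_def]; ring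
  have hv2e : v2 = n1 + (r:ℤ)*g := by rw [hv2, hg, Int.emod_def]; ring
  -- integer identities for the images of the three vertices
  have iA1 : na*a1 + nb*a2 + (r:ℤ)*e = v1 := by
    rw [hna, hnb, hv1e, hm1]; ring
  have iA2 : nc*a1 + nd*a2 + (r:ℤ)*g = v2 := by
    rw [hnc, hnd, hv2e, hn1]; ring
  have iB1 : na*b1 + nb*b2 + (r:ℤ)*e = v1 + 1 := by
    rw [hna, hnb, hv1e, hm1]; linear_combination hDsq - Dt*hDt
  have iB2 : nc*b1 + nd*b2 + (r:ℤ)*g = v2 := by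
    rw [hnc, hnd, hv2e, hn1]; ring
  have iC1 : na*c1 + nb*c2 + (r:ℤ)*e = v1 := by
    rw [hna, hnb, hv1e, hm1]; ring
  have iC2 : nc*c1 + nd*c2 + (r:ℤ)*g = v2 + 1 := by
    rw [hnc, hnd, hv2e, hn1]; linear_combination hDsq - Dt*hDt
  -- the unimodular map
  set f : ℝ×ℝ → ℝ×ℝ := fun p =>
    ((na:ℝ)*p.1 + (nb:ℝ)*p.2 + (e:ℝ), (nc:ℝ)*p.1 + (nd:ℝ)*p.2 + (g:ℝ)) with hf
  have hdet : na*nd - nb*nc = Dt := by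
    rw [hna, hnb, hnc, hnd]; linear_combination (-Dt*Dt)*hDt + Dt*hDsq
  have hUni : Unimod f := by
    refine ⟨na, nb, nc, nd, e, g, ?_, fun p => rfl⟩
    rw [hdet]; exact hDpm'
  -- images of the vertices
  have hfa : f ((a1:ℝ)/r, (a2:ℝ)/r) = ((v1:ℝ)/r, (v2:ℝ)/r) := by
    apply Prod.ext
    · show (na:ℝ)*((a1:ℝ)/r) + (nb:ℝ)*((a2:ℝ)/r) + (e:ℝ) = (v1:ℝ)/r
      field_simp
      exact_mod_cast (by linear_combination iA1 : na*a1 + nb*a2 + (r:ℤ)*e = v1)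
    · show (nc:ℝ)*((a1:ℝ)/r) + (nd:ℝ)*((a2:ℝ)/r) + (g:ℝ) = (v2:ℝ)/r
      field_simp
      exact_mod_cast (by linear_combination iA2 : nc*a1 + nd*a2 + (r:ℤ)*g = v2)
  have hfb : f ((b1:ℝ)/r, (b2:ℝ)/r) = (((v1:ℝ)+1)/r, (v2:ℝ)/r) := by
    apply Prod.ext
    · show (na:ℝ)*((b1:ℝ)/r) + (nb:ℝ)*((b2:ℝ)/r) + (e:ℝ) = ((v1:ℝ)+1)/r
      field_simp
      exact_mod_cast (by linear_combination iB1 : na*b1 + nb*b2 + (r:ℤ)*e = v1 + 1)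
    · show (nc:ℝ)*((b1:ℝ)/r) + (nd:ℝ)*((b2:ℝ)/r) + (g:ℝ) = (v2:ℝ)/r
      field_simp
      exact_mod_cast (by linear_combination iB2 : nc*b1 + nd*b2 + (r:ℤ)*g = v2)
  have hfc : f ((c1:ℝ)/r, (c2:ℝ)/r) = ((v1:ℝ)/r, ((v2:ℝ)+1)/r) := by
    apply Prod.ext
    · show (na:ℝ)*((c1:ℝ)/r) + (nb:ℝ)*((c2:ℝ)/r) + (e:ℝ) = (v1:ℝ)/r
      field_simp
      exact_mod_cast (by linear_combination iC1 : na*c1 + nb*c2 + (r:ℤ)*e = v1)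
    · show (nc:ℝ)*((c1:ℝ)/r) + (nd:ℝ)*((c2:ℝ)/r) + (g:ℝ) = ((v2:ℝ)+1)/r
      field_simp
      exact_mod_cast (by linear_combination iC2 : nc*c1 + nd*c2 + (r:ℤ)*g = v2 + 1)
  have hIMG : f '' P = convexHull ℝ
      {((v1:ℝ)/r, (v2:ℝ)/r), (((v1:ℝ)+1)/r, (v2:ℝ)/r), ((v1:ℝ)/r, ((v2:ℝ)+1)/r)} := by
    rw [hPabc, hf, image_affine, Set.image_insert_eq, Set.image_insert_eq, Set.image_singleton]
    show convexHull ℝ {f ((a1:ℝ)/r, (a2:ℝ)/r), f ((b1:ℝ)/r, (b2:ℝ)/r), f ((c1:ℝ)/r, (c2:ℝ)/r)} = _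
    rw [hfa, hfb, hfc]
  -- the image triangle contains no lattice points
  have hEMPTY : convexHull ℝ
      {((v1:ℝ)/r, (v2:ℝ)/r), (((v1:ℝ)+1)/r, (v2:ℝ)/r), ((v1:ℝ)/r, ((v2:ℝ)+1)/r)} ∩ latt = ∅ := by
    rw [← hIMG]
    apply Set.eq_empty_iff_forall_notMem.2
    rintro y ⟨⟨x, hxP, rfl⟩, ym, yn, hy⟩
    have h1 : (na:ℝ)*x.1 + (nb:ℝ)*x.2 + (e:ℝ) = ym := by
      have := congrArg Prod.fst hy; simpa [hf] using this
    have h2 : (nc:ℝ)*x.1 + (nd:ℝ)*x.2 + (g:ℝ) = yn := by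
      have := congrArg Prod.snd hy; simpa [hf] using this
    rw [hna, hnb] at h1
    rw [hnc, hnd] at h2
    push_cast at h1 h2
    have hDtR : (Dt:ℝ)*(Dt:ℝ) = 1 := by exact_mod_cast hDsq
    have hDtRdef : (Dt:ℝ) = ((b1:ℝ)-a1)*((c2:ℝ)-a2) - ((b2:ℝ)-a2)*((c1:ℝ)-a1) := by
      exact_mod_cast hDt
    have hx1 : x.1 = (((b1-a1)*(ym-e) + (c1-a1)*(yn-g) : ℤ) : ℝ) := by
      push_cast
      linear_combination ((b1:ℝ)-a1)*h1 + ((c1:ℝ)-a1)*h2 - x.1*hDtR + (x.1*(Dt:ℝ))*hDtRdef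
    have hx2 : x.2 = (((b2-a2)*(ym-e) + (c2-a2)*(yn-g) : ℤ) : ℝ) := by
      push_cast
      linear_combination ((b2:ℝ)-a2)*h1 + ((c2:ℝ)-a2)*h2 - x.2*hDtR + (x.2*(Dt:ℝ))*hDtRdef
    have hxlatt : x ∈ latt := ⟨_, _, Prod.ext hx1 hx2⟩
    have : x ∈ P ∩ latt := ⟨hxP, hxlatt⟩
    rw [hPlatt] at this
    exact this
  refine ⟨(v1, v2), ?_, ?_, ?_, ?_, ?_, f, hUni, ?_⟩
  · show (0:ℤ) ≤ v1
    rw [hv1]; exact Int.emod_nonneg _ hrZ.ne'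
  · show v1 ≤ (r:ℤ) - 1
    have := Int.emod_lt_of_pos m1 hrZ
    omega
  · show (0:ℤ) ≤ v2
    rw [hv2]; exact Int.emod_nonneg _ hrZ.ne'
  · show v2 ≤ (r:ℤ) - 1
    have := Int.emod_lt_of_pos n1 hrZ
    omega
  · exact hEMPTY
  · exact hIMG
end

section
/- Let P be a lattice polygon with first width w₁ (attained in the x-direction) and second width w₂, contained in the rectangle [0,w₁] × [0,w₂] with a vertex on each edge of the rectangle. For any integer h with 2 ≤ h ≤ w₁−2, setting h' = min(h, w₁−h), the polygon P contains at least h'−1 interior lattice points on the line x = h. -/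
open Set

private lemma cross_bounds {P : Set (ℝ × ℝ)} (hconv : Convex ℝ P)
    {h m M : ℝ} (hsl : ∀ p ∈ P, p.1 = h → m ≤ p.2 ∧ p.2 ≤ M)
    {p q : ℝ × ℝ} (hp : p ∈ P) (hq : q ∈ P)
    (h2 : h ≤ q.1) (hlt : p.1 < q.1) (h1 : p.1 ≤ h) :
    m * (q.1 - p.1) ≤ p.2 * (q.1 - h) + q.2 * (h - p.1) ∧
      p.2 * (q.1 - h) + q.2 * (h - p.1) ≤ M * (q.1 - p.1) := by
  have hd : 0 < q.1 - p.1 := by linarith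
  set a := (q.1 - h) / (q.1 - p.1) with ha
  set b := (h - p.1) / (q.1 - p.1) with hb
  have ha0 : 0 ≤ a := div_nonneg (by linarith) hd.le
  have hb0 : 0 ≤ b := div_nonneg (by linarith) hd.le
  have hab : a + b = 1 := by
    rw [ha, hb, ← add_div, div_eq_one_iff_eq hd.ne']
    ring
  have hz : a • p + b • q ∈ P := hconv hp hq ha0 hb0 hab
  have hz1 : (a • p + b • q).1 = h := by
    have : (a • p + b • q).1 = a * p.1 + b * q.1 := rfl
    rw [this, ha, hb]
    field_simp
    ring
  obtain ⟨hlo, hhi⟩ := hsl _ hz hz1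
  have hz2 : (a • p + b • q).2 = a * p.2 + b * q.2 := rfl
  rw [hz2] at hlo hhi
  have key : (a * p.2 + b * q.2) * (q.1 - p.1) = p.2 * (q.1 - h) + q.2 * (h - p.1) := by
    rw [ha, hb]; field_simp
  constructor
  · have := mul_le_mul_of_nonneg_right hlo hd.le
    rw [key] at this; linarith
  · have := mul_le_mul_of_nonneg_right hhi hd.le
    rw [key] at this; linarith


-- A2 : PR2 upper bound
private lemma arA2 {w1 w2 h M ta p1 p2 : ℝ}
    (tp : w2*(p1-h) + p2*(h-ta) ≤ M*(p1-ta))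
    (hdel : w2 - M < h - ta) (hp1w : p1 ≤ w1) (hta0 : 0 ≤ ta)
    (h0 : 0 < h) (hM2 : M ≤ w2) (hhw : h < w1) :
    h*(p1+p2) ≤ h*(w1+w2) - (w2-M)*w1 := by
  nlinarith [mul_le_mul_of_nonneg_left tp h0.le,
    mul_nonneg (mul_nonneg h0.le (sub_nonneg.2 hp1w))
      (by linarith : (0:ℝ) ≤ (h - ta) - (w2 - M)),
    mul_nonneg (mul_nonneg hta0 (by linarith : (0:ℝ) ≤ w2 - M))
      (by linarith : (0:ℝ) ≤ w1 - h)]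

-- A4 : QR1-PR2 final
private lemma arA4 {w1 w2 h m M : ℝ}
    (hfin : (w2-M)*w1 + h*h + h*m ≤ h*w1)
    (hmw : m ≤ w1 - h) (hsA : M - m < h) (h12 : w1 ≤ w2)
    (h0 : 0 < h) (hhw : h < w1) (hm0 : 0 ≤ m) : False := by
  nlinarith [mul_nonneg (by linarith : (0:ℝ) ≤ (w1-h) - m) (by linarith : (0:ℝ) ≤ w1 - h),
    mul_pos (by linarith : (0:ℝ) < w1) (by linarith : (0:ℝ) < h - (M - m)),
    mul_nonneg (by linarith : (0:ℝ) ≤ w2 - w1) (by linarith : (0:ℝ) ≤ w1)]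

-- A5 : QR2 lower bound on V
private lemma arA5 {h m c q1 q2 : ℝ}
    (lq : m*q1 ≤ c*(q1-h) + q2*h)
    (hq1 : h ≤ q1) (hc : m + h < c) (h0 : 0 < h) (hq20 : 0 ≤ q2) :
    c*h ≤ (q1+q2)*(c-m) := by
  rcases le_or_gt (q1*(c-m)) (c*h) with hsp | hsp
  · nlinarith [mul_le_mul_of_nonneg_right lq (by linarith : (0:ℝ) ≤ c - m),
      mul_nonneg (by linarith : (0:ℝ) ≤ c*h - q1*(c-m))
        (by linarith : (0:ℝ) ≤ c - m - h)]
  · nlinarith [mul_nonneg hq20 (by linarith : (0:ℝ) ≤ c - m)]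

-- A6 : QR2-PR2 final
private lemma arA6 {w1 w2 h m M c v : ℝ}
    (hstar : h*v + (w2-M)*w1 ≤ h*w1)
    (hx0 : c*h ≤ v*(c-m))
    (hcm : m + h < c) (hcw : c ≤ w2) (hmz : 0 < m) (hsA : M - m < h)
    (hMz : M < w2) (h12 : w1 ≤ w2) (h0 : 0 < h) (hhw : h < w1)
    (hmM : m ≤ M) (hv0 : 0 ≤ v) : False := by
  rcases le_or_gt (w2 - M) h with hdh | hdh
  · have hxh : h < w2 - m := by linarith
    have key1 : w1*(h-(w2-M))*(w2-m) < w2*h*h := by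
      nlinarith [mul_nonneg (by linarith : (0:ℝ) ≤ (w2-m) - h)
          (by linarith : (0:ℝ) ≤ (w2-m) - (M-m)),
        mul_pos (by linarith : (0:ℝ) < w1) (mul_pos h0 (by linarith : (0:ℝ) < h - (M-m))),
        mul_nonneg (by linarith : (0:ℝ) ≤ w2 - w1) (mul_nonneg h0.le h0.le)]
    have key2 : w2*(c-m) ≤ c*(w2-m) := by nlinarith [mul_nonneg hmz.le (by linarith : (0:ℝ) ≤ w2 - c)]
    have key3 : c*h*h ≤ w1*(h-(w2-M))*(c-m) := by
      nlinarith [mul_le_mul_of_nonneg_right hstar (by linarith : (0:ℝ) ≤ c - m),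
        mul_le_mul_of_nonneg_left hx0 h0.le]
    nlinarith [mul_le_mul_of_nonneg_right key2 (mul_nonneg (by linarith : (0:ℝ) ≤ w1) (by linarith : (0:ℝ) ≤ h-(w2-M))),
      mul_le_mul_of_nonneg_right key3 (by linarith : (0:ℝ) ≤ w2),
      mul_lt_mul_of_pos_right key1 (by linarith : (0:ℝ) < c)]
  · nlinarith [mul_pos (by linarith : (0:ℝ) < w2 - M - h) (by linarith : (0:ℝ) < w1)]

-- A11 : QL-a PR2 final
private lemma arA11 {w1 w2 h m M v : ℝ}
    (hstar : h*v + (w2-M)*w1 ≤ h*w1)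
    (hVa : m*w1 ≤ v*(w1-h))
    (hmw : m ≤ w1 - h) (hsA : M - m < h) (hsB : M - m < w1 - h)
    (h12 : w1 ≤ w2) (h0 : 0 < h) (hhw : h < w1)
    (hm0 : 0 ≤ m) (hmM : m ≤ M) : False := by
  have step : h*m ≤ (h-(w2-M))*(w1-h) := by
    have h1 : h*(m*w1) ≤ (h*w1 - (w2-M)*w1)*(w1-h) := by
      nlinarith [mul_le_mul_of_nonneg_right hstar (by linarith : (0:ℝ) ≤ w1 - h),
        mul_le_mul_of_nonneg_left hVa h0.le]
    nlinarith [mul_pos (by linarith : (0:ℝ) < w1) h0]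
  rcases le_or_gt w1 (2*h) with hcase | hcase
  · nlinarith [mul_pos (by linarith : (0:ℝ) < w1 - h) (by linarith : (0:ℝ) < (w1-h) - (M-m)),
      mul_nonneg hm0 (by linarith : (0:ℝ) ≤ 2*h - w1),
      mul_nonneg (by linarith : (0:ℝ) ≤ w2 - w1) (by linarith : (0:ℝ) ≤ w1 - h)]
  · nlinarith [mul_pos (by linarith : (0:ℝ) < w1 - h) (by linarith : (0:ℝ) < h - (M-m)),
      mul_nonneg (by linarith : (0:ℝ) ≤ (w1-h) - m) (by linarith : (0:ℝ) ≤ w1 - 2*h),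
      mul_nonneg (by linarith : (0:ℝ) ≤ w2 - w1) (by linarith : (0:ℝ) ≤ w1 - h)]

-- A13 : QL-b PR2 final
private lemma arA13 {w1 w2 h m M v : ℝ}
    (hstar : h*v + (w2-M)*w1 ≤ h*w1)
    (hVb : h + m ≤ v) (hsA : M - m < h) (h12 : w1 ≤ w2) (hMz : M < w2)
    (h0 : 0 < h) (hhw : h < w1) : False := by
  nlinarith [mul_pos h0 (by linarith : (0:ℝ) < h - (M-m)),
    mul_nonneg (by linarith : (0:ℝ) ≤ w2 - M) (by linarith : (0:ℝ) ≤ w1 - h),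
    mul_nonneg (by linarith : (0:ℝ) ≤ w2 - w1) h0.le]

-- A1 : PR1 upper bound
private lemma arA1 {w2 h M ta p1 p2 : ℝ}
    (tp : w2*(p1-h) + p2*(h-ta) ≤ M*(p1-ta))
    (hdel : h - ta ≤ w2 - M) (hp1 : h ≤ p1) (htalt : ta < h) :
    p1 + p2 ≤ h + M := by
  nlinarith [mul_nonneg (sub_nonneg.2 hp1) (by linarith : (0:ℝ) ≤ (w2-M) - (h-ta))]

-- A3 : QR1 lower bound on V
private lemma arA3 {h m c q1 q2 : ℝ}
    (lq : m*q1 ≤ c*(q1-h) + q2*h)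
    (hq1 : h ≤ q1) (hc : c ≤ m + h) (h0 : 0 < h) :
    h + m ≤ q1 + q2 := by
  nlinarith [mul_nonneg (sub_nonneg.2 hq1) (by linarith : (0:ℝ) ≤ h + m - c)]

-- A7a : QL-a V bound
private lemma arA7a {h m tb q1 q2 : ℝ}
    (qb : m*(tb-q1) ≤ q2*(tb-h))
    (hq10 : 0 ≤ q1) (hmb : m ≤ tb - h) (hq1 : q1 ≤ h) (h0 : 0 < h) :
    m*tb ≤ (q1+q2)*(tb-h) := by
  nlinarith [mul_nonneg hq10 (by linarith : (0:ℝ) ≤ tb - h - m)]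

-- A7b : transfer to w1
private lemma arA7b {w1 h m tb v : ℝ}
    (hVa : m*tb ≤ v*(tb-h)) (htbw : tb ≤ w1) (htblt : h < tb)
    (h0 : 0 < h) (hm0 : 0 ≤ m) (hhw : h < w1) :
    m*w1 ≤ v*(w1-h) := by
  have h1 : m*w1*(tb-h) ≤ m*tb*(w1-h) := by
    nlinarith [mul_nonneg (mul_nonneg hm0 h0.le) (by linarith : (0:ℝ) ≤ w1 - tb)]
  have h2 : m*tb*(w1-h) ≤ (v*(w1-h))*(tb-h) := by
    nlinarith [mul_le_mul_of_nonneg_right hVa (by linarith : (0:ℝ) ≤ w1 - h)]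
  exact le_of_mul_le_mul_right (le_trans h1 h2) (by linarith)

-- A7c : V ≥ m
private lemma arA7c {w1 h m v : ℝ} (hVa : m*w1 ≤ v*(w1-h))
    (h0 : 0 < h) (hhw : h < w1) (hm0 : 0 ≤ m) : m ≤ v := by
  nlinarith [mul_nonneg hm0 h0.le]

-- A8 : p-left, s2 ≤ 1
private lemma arA8 {w1 h M d p1 p2 : ℝ}
    (pr : p2*(w1-h) + d*(h-p1) ≤ M*(w1-p1))
    (hp1 : p1 ≤ h) (hs2c : M - d ≤ w1 - h) (hhw : h < w1) :
    p1 + p2 ≤ h + M := by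
  nlinarith [mul_nonneg (by linarith : (0:ℝ) ≤ h - p1)
    (by linarith : (0:ℝ) ≤ (w1-h) - (M-d))]

-- A9 : p-left, s2 > 1
private lemma arA9 {w1 h M d p1 p2 : ℝ}
    (pr : p2*(w1-h) + d*(h-p1) ≤ M*(w1-p1))
    (hp10 : 0 ≤ p1) (hs2c : w1 - h < M - d) :
    (p1+p2)*(w1-h) ≤ M*w1 - d*h := by
  nlinarith [mul_nonneg hp10 (by linarith : (0:ℝ) ≤ (M-d) - (w1-h))]

-- A10 : QL-a p-left s2>1 final
private lemma arA10 {w1 w2 h m M d v p1 p2 q1 q2 : ℝ}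
    (hgap : w2 ≤ p1 + p2 - (q1 + q2)) (hveq : v = q1 + q2)
    (hU2 : (p1+p2)*(w1-h) ≤ M*w1 - d*h)
    (hVa : m*w1 ≤ v*(w1-h))
    (hd0 : 0 ≤ d) (hsB : M - m < w1 - h) (h12 : w1 ≤ w2)
    (h0 : 0 < h) (hhw : h < w1) : False := by
  subst hveq
  nlinarith [mul_le_mul_of_nonneg_right hgap (by linarith : (0:ℝ) ≤ w1 - h),
    mul_nonneg hd0 h0.le,
    mul_lt_mul_of_pos_right hsB (by linarith : (0:ℝ) < w1),
    mul_le_mul_of_nonneg_right h12 (by linarith : (0:ℝ) ≤ w1 - h)]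

-- A12 : QL-b V bound
private lemma arA12 {h m tb q1 q2 : ℝ}
    (qb : m*(tb-q1) ≤ q2*(tb-h))
    (hq1 : q1 ≤ h) (hmb : tb - h < m) (htblt : h < tb) :
    h + m ≤ q1 + q2 := by
  nlinarith [mul_nonneg (by linarith : (0:ℝ) ≤ h - q1) (by linarith : (0:ℝ) ≤ m - (tb - h))]

-- star derivation
private lemma arStar {w1 w2 h M p1 p2 q1 q2 : ℝ}
    (hgap : w2 ≤ p1 + p2 - (q1 + q2))
    (hU : h*(p1+p2) ≤ h*(w1+w2) - (w2-M)*w1) (h0 : 0 < h) :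
    h*(q1+q2) + (w2-M)*w1 ≤ h*w1 := by
  nlinarith [mul_le_mul_of_nonneg_left hgap h0.le]

-- QR1-PR2 final assembly
private lemma arFin1 {w1 w2 h m M v : ℝ}
    (hstar : h*v + (w2-M)*w1 ≤ h*w1) (hV : h + m ≤ v)
    (hmw : m ≤ w1 - h) (hsA : M - m < h) (h12 : w1 ≤ w2)
    (h0 : 0 < h) (hhw : h < w1) (hm0 : 0 ≤ m) : False := by
  have hfin : (w2-M)*w1 + h*h + h*m ≤ h*w1 := by
    nlinarith [mul_le_mul_of_nonneg_left hV h0.le]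
  exact arA4 hfin hmw hsA h12 h0 hhw hm0

private lemma coreC {P : Set (ℝ × ℝ)} (hconv : Convex ℝ P)
    {w1 w2 h m M c d ta tb : ℝ}
    (hbox : ∀ p ∈ P, 0 ≤ p.1 ∧ p.1 ≤ w1 ∧ 0 ≤ p.2 ∧ p.2 ≤ w2)
    (hsl : ∀ p ∈ P, p.1 = h → m ≤ p.2 ∧ p.2 ≤ M)
    (hL : (((0:ℝ), c) : ℝ × ℝ) ∈ P) (hR : ((w1, d) : ℝ × ℝ) ∈ P)
    (hT : ((ta, w2) : ℝ × ℝ) ∈ P) (hB : ((tb, (0:ℝ)) : ℝ × ℝ) ∈ P)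
    (hta : ta ≤ h) (htb : h ≤ tb)
    (h0 : 0 < h) (hhw : h < w1) (h12 : w1 ≤ w2)
    (hm0 : 0 ≤ m) (hmM : m ≤ M) (hM2 : M ≤ w2)
    (hpair : ∃ p ∈ P, ∃ q ∈ P, w2 ≤ (p.1 + p.2) - (q.1 + q.2))
    (hsA : M - m < h) (hsB : M - m < w1 - h) : False := by
  obtain ⟨hta0, -, -, -⟩ := hbox _ hT
  obtain ⟨-, htbw, -, -⟩ := hbox _ hB
  obtain ⟨-, -, hc0, hcw⟩ := hbox _ hL
  obtain ⟨-, -, hd0, hdw⟩ := hbox _ hR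
  simp only at hta0 htbw hc0 hcw hd0 hdw
  obtain ⟨p, hp, q, hq, hgap⟩ := hpair
  obtain ⟨hp10, hp1w, hp20, hp2w⟩ := hbox _ hp
  obtain ⟨hq10, hq1w, hq20, hq2w⟩ := hbox _ hq
  rcases eq_or_lt_of_le hm0 with hmz | hmz
  · -- m = 0
    have htalt : ta < h := by
      rcases eq_or_lt_of_le hta with he | he
      · exfalso; have := (hsl _ hT he).2; simp only at this; linarith
      · exact he
    have hUb : p.1 + p.2 ≤ h + M := by
      by_cases hp1 : p.1 ≤ h
      · obtain ⟨-, pr⟩ := cross_bounds hconv hsl hp hR (le_of_lt hhw)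
          (by simpa using lt_of_le_of_lt hp1 hhw) (by simpa using hp1)
        simp only at pr
        exact arA8 pr hp1 (by linarith) hhw
      · push_neg at hp1
        obtain ⟨-, tp⟩ := cross_bounds hconv hsl hT hp hp1.le
          (by simpa using lt_trans htalt hp1) (by simpa using hta)
        simp only at tp
        exact arA1 tp (by linarith) hp1.le htalt
    linarith
  · rcases eq_or_lt_of_le hM2 with hMz | hMz
    · -- M = w2
      have hVb : h + m ≤ q.1 + q.2 := by
        by_cases hq1 : h ≤ q.1
        · obtain ⟨lq, -⟩ := cross_bounds hconv hsl hL hq hq1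
            (by simpa using lt_of_lt_of_le h0 hq1) (by simpa using h0.le)
          simp only at lq
          have lq' : m*q.1 ≤ c*(q.1-h) + q.2*h := by linarith
          exact arA3 lq' hq1 (by linarith) h0
        · push_neg at hq1
          have htblt : h < tb := by
            rcases eq_or_lt_of_le htb with he | he
            · exfalso; have := (hsl _ hB he.symm).1; simp only at this; linarith
            · exact he
          obtain ⟨qb, -⟩ := cross_bounds hconv hsl hq hB (le_of_lt htblt)
            (by simpa using lt_trans hq1 htblt) (by simpa using hq1.le)
          simp only at qb
          have qb' : m*(tb-q.1) ≤ q.2*(tb-h) := by linarith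
          exact arA12 qb' hq1.le (by linarith) htblt
      linarith
    · -- main : 0 < m, M < w2
      have htalt : ta < h := by
        rcases eq_or_lt_of_le hta with he | he
        · exfalso; have := (hsl _ hT he).2; simp only at this; linarith
        · exact he
      have htblt : h < tb := by
        rcases eq_or_lt_of_le htb with he | he
        · exfalso; have := (hsl _ hB he.symm).1; simp only at this; linarith
        · exact he
      by_cases hq1 : h ≤ q.1
      · -- q right
        obtain ⟨lq, -⟩ := cross_bounds hconv hsl hL hq hq1
          (by simpa using lt_of_lt_of_le h0 hq1) (by simpa using h0.le)
        simp only at lq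
        have lq' : m*q.1 ≤ c*(q.1-h) + q.2*h := by linarith
        by_cases hc : c ≤ m + h
        · have hV : h + m ≤ q.1 + q.2 := arA3 lq' hq1 hc h0
          by_cases hp1 : p.1 ≤ h
          · linarith
          · push_neg at hp1
            obtain ⟨-, tp⟩ := cross_bounds hconv hsl hT hp hp1.le
              (by simpa using lt_trans htalt hp1) (by simpa using hta)
            simp only at tp
            by_cases hdel : h - ta ≤ w2 - M
            · have hU := arA1 tp hdel hp1.le htalt
              linarith
            · push_neg at hdel
              have hU := arA2 tp hdel hp1w hta0 h0 hM2 hhw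
              have hstar := arStar hgap hU h0
              obtain ⟨lb, -⟩ := cross_bounds hconv hsl hL hB htb
                (by simpa using lt_of_lt_of_le h0 htb) (by simpa using h0.le)
              simp only at lb
              have hmtb : m ≤ tb - h := by nlinarith
              exact arFin1 hstar hV (by linarith) hsA h12 h0 hhw hm0
        · push_neg at hc
          have hx0 := arA5 lq' hq1 hc h0 hq20
          have hVh : h < q.1 + q.2 := by nlinarith [mul_pos h0 hmz]
          by_cases hp1 : p.1 ≤ h
          · linarith
          · push_neg at hp1
            obtain ⟨-, tp⟩ := cross_bounds hconv hsl hT hp hp1.le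
              (by simpa using lt_trans htalt hp1) (by simpa using hta)
            simp only at tp
            by_cases hdel : h - ta ≤ w2 - M
            · have hU := arA1 tp hdel hp1.le htalt
              linarith
            · push_neg at hdel
              have hU := arA2 tp hdel hp1w hta0 h0 hM2 hhw
              have hstar := arStar hgap hU h0
              exact arA6 hstar hx0 hc hcw hmz hsA hMz h12 h0 hhw hmM (by linarith)
      · -- q left
        push_neg at hq1
        obtain ⟨qb, -⟩ := cross_bounds hconv hsl hq hB (le_of_lt htblt)
          (by simpa using lt_trans hq1 htblt) (by simpa using hq1.le)
        simp only at qb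
        have qb' : m*(tb-q.1) ≤ q.2*(tb-h) := by linarith
        by_cases hmb : m ≤ tb - h
        · have hVa := arA7a qb' hq10 hmb hq1.le h0
          have hVa' := arA7b hVa htbw htblt h0 hmz.le hhw
          have hVm := arA7c hVa' h0 hhw hmz.le
          by_cases hp1 : p.1 ≤ h
          · obtain ⟨-, pr⟩ := cross_bounds hconv hsl hp hR (le_of_lt hhw)
              (by simpa using lt_of_le_of_lt hp1 hhw) (by simpa using hp1)
            simp only at pr
            by_cases hs2c : M - d ≤ w1 - h
            · have hU := arA8 pr hp1 hs2c hhw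
              linarith
            · push_neg at hs2c
              have hU2 := arA9 pr hp10 hs2c
              exact arA10 hgap rfl hU2 hVa' hd0 hsB h12 h0 hhw
          · push_neg at hp1
            obtain ⟨-, tp⟩ := cross_bounds hconv hsl hT hp hp1.le
              (by simpa using lt_trans htalt hp1) (by simpa using hta)
            simp only at tp
            by_cases hdel : h - ta ≤ w2 - M
            · have hU := arA1 tp hdel hp1.le htalt
              linarith
            · push_neg at hdel
              have hU := arA2 tp hdel hp1w hta0 h0 hM2 hhw
              have hstar := arStar hgap hU h0
              exact arA11 hstar hVa' (by linarith) hsA hsB h12 h0 hhw hmz.le hmM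
        · push_neg at hmb
          have hVb := arA12 qb' hq1.le hmb htblt
          by_cases hp1 : p.1 ≤ h
          · linarith
          · push_neg at hp1
            obtain ⟨-, tp⟩ := cross_bounds hconv hsl hT hp hp1.le
              (by simpa using lt_trans htalt hp1) (by simpa using hta)
            simp only at tp
            by_cases hdel : h - ta ≤ w2 - M
            · have hU := arA1 tp hdel hp1.le htalt
              linarith
            · push_neg at hdel
              have hU := arA2 tp hdel hp1w hta0 h0 hM2 hhw
              have hstar := arStar hgap hU h0
              exact arA13 hstar hVb hsA h12 hMz h0 hhw

private lemma caseA {P : Set (ℝ × ℝ)} (hconv : Convex ℝ P)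
    {w1 w2 h m M d ta tb : ℝ}
    (hsl : ∀ p ∈ P, p.1 = h → m ≤ p.2 ∧ p.2 ≤ M)
    (hR : ((w1, d) : ℝ × ℝ) ∈ P)
    (hT : ((ta, w2) : ℝ × ℝ) ∈ P) (hB : ((tb, (0:ℝ)) : ℝ × ℝ) ∈ P)
    (hta : ta ≤ h) (htb : tb ≤ h) (h0 : 0 < h) (hhw : h < w1)
    (hta0 : 0 ≤ ta) (htb0 : 0 ≤ tb) (hd0 : 0 ≤ d) (hdw : d ≤ w2) :
    w2*(w1-h) ≤ (M-m)*w1 := by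
  obtain ⟨-, t1⟩ := cross_bounds hconv hsl hT hR (le_of_lt hhw)
    (by simpa using lt_of_le_of_lt hta hhw) (by simpa using hta)
  simp only at t1
  obtain ⟨b1, -⟩ := cross_bounds hconv hsl hB hR (le_of_lt hhw)
    (by simpa using lt_of_le_of_lt htb hhw) (by simpa using htb)
  simp only at b1
  -- t1 : w2*(w1-h) + d*(h-ta) ≤ M*(w1-ta) ; b1 : m*(w1-tb) ≤ 0*(w1-h) + d*(h-tb)
  have hMw : w2*w1 - (w2-d)*h ≤ M*w1 := by
    have k1 : (w2*w1 - (w2-d)*h)*(w1-ta) ≤ (M*w1)*(w1-ta) := by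
      nlinarith [mul_le_mul_of_nonneg_left t1 (by linarith : (0:ℝ) ≤ w1),
        mul_nonneg (mul_nonneg hta0 (by linarith : (0:ℝ) ≤ w1 - h))
          (by linarith : (0:ℝ) ≤ w2 - d)]
    exact le_of_mul_le_mul_right k1 (by linarith)
  have hmw : m*w1 ≤ d*h := by
    have k2 : (m*w1)*(w1-tb) ≤ (d*h)*(w1-tb) := by
      nlinarith [mul_le_mul_of_nonneg_left b1 (by linarith : (0:ℝ) ≤ w1),
        mul_nonneg (mul_nonneg hd0 htb0) (by linarith : (0:ℝ) ≤ w1 - h)]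
    exact le_of_mul_le_mul_right k2 (by linarith)
  nlinarith

private lemma caseB {P : Set (ℝ × ℝ)} (hconv : Convex ℝ P)
    {w1 w2 h m M c ta tb : ℝ}
    (hsl : ∀ p ∈ P, p.1 = h → m ≤ p.2 ∧ p.2 ≤ M)
    (hL : (((0:ℝ), c) : ℝ × ℝ) ∈ P)
    (hT : ((ta, w2) : ℝ × ℝ) ∈ P) (hB : ((tb, (0:ℝ)) : ℝ × ℝ) ∈ P)
    (hta : h ≤ ta) (htb : h ≤ tb) (h0 : 0 < h) (hhw : h < w1)
    (htaw : ta ≤ w1) (htbw : tb ≤ w1) (hc0 : 0 ≤ c) (hcw : c ≤ w2) :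
    w2*h ≤ (M-m)*w1 := by
  obtain ⟨-, t1⟩ := cross_bounds hconv hsl hL hT hta
    (by simpa using lt_of_lt_of_le h0 hta) (by simpa using h0.le)
  simp only at t1
  obtain ⟨b1, -⟩ := cross_bounds hconv hsl hL hB htb
    (by simpa using lt_of_lt_of_le h0 htb) (by simpa using h0.le)
  simp only at b1
  -- t1 : c*(ta-h) + w2*h ≤ M*(ta-0) ; b1 : m*(tb-0) ≤ c*(tb-h) + 0*h
  have hMw : c*w1 + (w2-c)*h ≤ M*w1 := by
    have k1 : (c*w1 + (w2-c)*h)*ta ≤ (M*w1)*ta := by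
      nlinarith [mul_le_mul_of_nonneg_left t1 (by linarith : (0:ℝ) ≤ w1),
        mul_nonneg (mul_nonneg h0.le (by linarith : (0:ℝ) ≤ w1 - ta))
          (by linarith : (0:ℝ) ≤ w2 - c)]
    exact le_of_mul_le_mul_right k1 (by linarith)
  have hmw : m*w1 ≤ c*w1 - c*h := by
    have k2 : (m*w1)*tb ≤ (c*w1 - c*h)*tb := by
      nlinarith [mul_le_mul_of_nonneg_left b1 (by linarith : (0:ℝ) ≤ w1),
        mul_nonneg (mul_nonneg hc0 h0.le) (by linarith : (0:ℝ) ≤ w1 - tb)]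
    exact le_of_mul_le_mul_right k2 (by linarith)
  nlinarith

private lemma coreD {P : Set (ℝ × ℝ)} (hconv : Convex ℝ P)
    {w1 w2 h m M c d ta tb : ℝ}
    (hbox : ∀ p ∈ P, 0 ≤ p.1 ∧ p.1 ≤ w1 ∧ 0 ≤ p.2 ∧ p.2 ≤ w2)
    (hsl : ∀ p ∈ P, p.1 = h → m ≤ p.2 ∧ p.2 ≤ M)
    (hL : (((0:ℝ), c) : ℝ × ℝ) ∈ P) (hR : ((w1, d) : ℝ × ℝ) ∈ P)
    (hT : ((ta, w2) : ℝ × ℝ) ∈ P) (hB : ((tb, (0:ℝ)) : ℝ × ℝ) ∈ P)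
    (hta : h ≤ ta) (htb : tb ≤ h)
    (h0 : 0 < h) (hhw : h < w1) (h12 : w1 ≤ w2)
    (hm0 : 0 ≤ m) (hmM : m ≤ M) (hM2 : M ≤ w2)
    (hpair : ∃ p ∈ P, ∃ q ∈ P, w2 ≤ (p.2 - p.1) - (q.2 - q.1))
    (hsA : M - m < h) (hsB : M - m < w1 - h) : False := by
  classical
  set f : ℝ × ℝ → ℝ × ℝ := fun z => (w1 - z.1, z.2) with hf
  have hmemf : ∀ z ∈ P, f z ∈ f '' P := fun z hz => ⟨z, hz, rfl⟩
  have hconv' : Convex ℝ (f '' P) := by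
    rintro x ⟨x0, hx0, rfl⟩ y ⟨y0, hy0, rfl⟩ a b ha hb hab
    refine ⟨a • x0 + b • y0, hconv hx0 hy0 ha hb hab, ?_⟩
    have e1 : (a • x0 + b • y0).1 = a*x0.1 + b*y0.1 := rfl
    have e2 : (a • x0 + b • y0).2 = a*x0.2 + b*y0.2 := rfl
    rw [hf]
    refine Prod.ext ?_ ?_
    · show w1 - (a • x0 + b • y0).1 = (a • (w1 - x0.1, x0.2) + b • (w1 - y0.1, y0.2)).1
      have e3 : (a • ((w1 - x0.1, x0.2) : ℝ × ℝ) + b • ((w1 - y0.1, y0.2) : ℝ × ℝ)).1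
          = a*(w1-x0.1) + b*(w1-y0.1) := rfl
      rw [e1, e3]; nlinarith [hab]
    · show (a • x0 + b • y0).2 = (a • ((w1 - x0.1, x0.2) : ℝ × ℝ) + b • ((w1 - y0.1, y0.2) : ℝ × ℝ)).2
      rfl
  have hbox' : ∀ p ∈ f '' P, 0 ≤ p.1 ∧ p.1 ≤ w1 ∧ 0 ≤ p.2 ∧ p.2 ≤ w2 := by
    rintro p ⟨z, hz, rfl⟩
    obtain ⟨a1, a2, a3, a4⟩ := hbox _ hz
    exact ⟨by simp [hf]; linarith, by simp [hf]; linarith, a3, a4⟩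
  have hsl' : ∀ p ∈ f '' P, p.1 = w1 - h → m ≤ p.2 ∧ p.2 ≤ M := by
    rintro p ⟨z, hz, rfl⟩ hz1
    simp only [hf] at hz1 ⊢
    exact hsl _ hz (by linarith)
  have hL' : (((0:ℝ), d) : ℝ × ℝ) ∈ f '' P := by
    refine ⟨(w1, d), hR, ?_⟩; simp [hf]
  have hR' : ((w1, c) : ℝ × ℝ) ∈ f '' P := by
    refine ⟨((0:ℝ), c), hL, ?_⟩; simp [hf]
  have hT' : ((w1 - ta, w2) : ℝ × ℝ) ∈ f '' P := ⟨(ta, w2), hT, rfl⟩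
  have hB' : ((w1 - tb, (0:ℝ)) : ℝ × ℝ) ∈ f '' P := ⟨(tb, 0), hB, rfl⟩
  obtain ⟨p, hp, q, hq, hgap⟩ := hpair
  exact coreC hconv' hbox' hsl' hL' hR' hT' hB' (by linarith) (by linarith)
    (by linarith) (by linarith) h12 hm0 hmM hM2
    ⟨f p, hmemf _ hp, f q, hmemf _ hq, by simp only [hf]; linarith⟩
    (by linarith) (by linarith)

private lemma seg_mem {P : Set (ℝ × ℝ)} (hconv : Convex ℝ P) {h mm MM : ℝ}
    (hm : ((h, mm) : ℝ × ℝ) ∈ P) (hM : ((h, MM) : ℝ × ℝ) ∈ P) {y : ℝ}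
    (h1 : mm ≤ y) (h2 : y ≤ MM) : ((h, y) : ℝ × ℝ) ∈ P := by
  rcases eq_or_lt_of_le (h1.trans h2) with he | hlt
  · have : y = mm := le_antisymm (he ▸ h2) h1
    rwa [this]
  · have hd : 0 < MM - mm := by linarith
    have ha0 : 0 ≤ (MM - y)/(MM - mm) := div_nonneg (by linarith) hd.le
    have hb0 : 0 ≤ (y - mm)/(MM - mm) := div_nonneg (by linarith) hd.le
    have hab : (MM - y)/(MM - mm) + (y - mm)/(MM - mm) = 1 := by
      rw [← add_div, div_eq_one_iff_eq hd.ne']; ring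
    have := hconv hm hM ha0 hb0 hab
    convert this using 1
    refine Prod.ext ?_ ?_
    · show h = ((MM - y)/(MM - mm)) * h + ((y - mm)/(MM - mm)) * h
      rw [← add_mul, hab, one_mul]
    · show y = ((MM - y)/(MM - mm)) * mm + ((y - mm)/(MM - mm)) * MM
      field_simp
      ring

private lemma memP_interp {P : Set (ℝ × ℝ)} (hconv : Convex ℝ P) {w1 h mm MM d u y : ℝ}
    (hm : ((h, mm) : ℝ × ℝ) ∈ P) (hM : ((h, MM) : ℝ × ℝ) ∈ P)
    (hR : ((w1, d) : ℝ × ℝ) ∈ P)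
    (hu1 : h ≤ u) (hu2 : u < w1) (hhw : h < w1)
    (hy1 : mm*(w1-u) + d*(u-h) ≤ y*(w1-h)) (hy2 : y*(w1-h) ≤ MM*(w1-u) + d*(u-h)) :
    ((u, y) : ℝ × ℝ) ∈ P := by
  have hwu : 0 < w1 - u := by linarith
  have hwh : 0 < w1 - h := by linarith
  set yy := (y*(w1-h) - d*(u-h))/(w1-u) with hyy
  have hyy1 : mm ≤ yy := by rw [hyy, le_div_iff₀ hwu]; linarith
  have hyy2 : yy ≤ MM := by rw [hyy, div_le_iff₀ hwu]; linarith
  have hz := seg_mem hconv hm hM hyy1 hyy2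
  have ha0 : 0 ≤ (w1-u)/(w1-h) := div_nonneg hwu.le hwh.le
  have hb0 : 0 ≤ (u-h)/(w1-h) := div_nonneg (by linarith) hwh.le
  have hab : (w1-u)/(w1-h) + (u-h)/(w1-h) = 1 := by
    rw [← add_div, div_eq_one_iff_eq hwh.ne']; ring
  have := hconv hz hR ha0 hb0 hab
  convert this using 1
  refine Prod.ext ?_ ?_
  · show u = ((w1-u)/(w1-h)) * h + ((u-h)/(w1-h)) * w1
    field_simp
    ring
  · show y = ((w1-u)/(w1-h)) * yy + ((u-h)/(w1-h)) * d
    rw [hyy]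
    field_simp
    ring

private lemma memP_interpL {P : Set (ℝ × ℝ)} (hconv : Convex ℝ P) {h mm MM c u y : ℝ}
    (hm : ((h, mm) : ℝ × ℝ) ∈ P) (hM : ((h, MM) : ℝ × ℝ) ∈ P)
    (hL : (((0:ℝ), c) : ℝ × ℝ) ∈ P)
    (hu1 : 0 < u) (hu2 : u ≤ h) (h0 : 0 < h)
    (hy1 : mm*u + c*(h-u) ≤ y*h) (hy2 : y*h ≤ MM*u + c*(h-u)) :
    ((u, y) : ℝ × ℝ) ∈ P := by
  set yy := (y*h - c*(h-u))/u with hyy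
  have hyy1 : mm ≤ yy := by rw [hyy, le_div_iff₀ hu1]; linarith
  have hyy2 : yy ≤ MM := by rw [hyy, div_le_iff₀ hu1]; linarith
  have hz := seg_mem hconv hm hM hyy1 hyy2
  have ha0 : 0 ≤ (h-u)/h := div_nonneg (by linarith) h0.le
  have hb0 : 0 ≤ u/h := div_nonneg hu1.le h0.le
  have hab : (h-u)/h + u/h = 1 := by
    rw [← add_div, div_eq_one_iff_eq h0.ne']; ring
  have := hconv hL hz ha0 hb0 hab
  convert this using 1
  refine Prod.ext ?_ ?_
  · show u = ((h-u)/h) * 0 + (u/h) * h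
    field_simp
    ring
  · show y = ((h-u)/h) * c + (u/h) * yy
    rw [hyy]
    field_simp
    ring

set_option maxHeartbeats 800000 in
private lemma interior_mem {P : Set (ℝ × ℝ)} (hconv : Convex ℝ P) {w1 w2 h mm MM c d : ℝ}
    (hm : ((h, mm) : ℝ × ℝ) ∈ P) (hM : ((h, MM) : ℝ × ℝ) ∈ P)
    (hL : (((0:ℝ), c) : ℝ × ℝ) ∈ P) (hR : ((w1, d) : ℝ × ℝ) ∈ P)
    (h0 : 0 < h) (hhw : h < w1)
    (hmm0 : 0 ≤ mm) (hMMw : MM ≤ w2)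
    (hc0 : 0 ≤ c) (hcw : c ≤ w2) (hd0 : 0 ≤ d) (hdw : d ≤ w2)
    {y : ℝ} (h1 : mm < y) (h2 : y < MM) : ((h, y) : ℝ × ℝ) ∈ interior P := by
  have hw20 : 0 < w2 := by linarith
  set g := min (y - mm) (MM - y) with hg
  have hg0 : 0 < g := lt_min (by linarith) (by linarith)
  set ε := min (g*(w1-h)/(2*(w2+1))) (min (g*h/(2*(w2+1))) (min (h/2) ((w1-h)/2))) with hε
  have hεA : ε ≤ g*(w1-h)/(2*(w2+1)) := min_le_left _ _
  have hεB : ε ≤ g*h/(2*(w2+1)) := le_trans (min_le_right _ _) (min_le_left _ _)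
  have hεC : ε ≤ h/2 := le_trans (min_le_right _ _) (le_trans (min_le_right _ _) (min_le_left _ _))
  have hεD : ε ≤ (w1-h)/2 := le_trans (min_le_right _ _) (le_trans (min_le_right _ _) (min_le_right _ _))
  have hε0 : 0 < ε := by
    apply lt_min
    · exact div_pos (mul_pos hg0 (by linarith)) (by linarith)
    apply lt_min
    · exact div_pos (mul_pos hg0 (by linarith)) (by linarith)
    exact lt_min (by linarith) (by linarith)
  have hgy1 : g ≤ y - mm := min_le_left _ _
  have hgy2 : g ≤ MM - y := min_le_right _ _
  have hεw2 : ε*(w2+1) ≤ g*(w1-h)/2 := by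
    rw [le_div_iff₀ (by linarith : (0:ℝ) < 2*(w2+1))] at hεA
    nlinarith
  have hεw2' : ε*(w2+1) ≤ g*h/2 := by
    rw [le_div_iff₀ (by linarith : (0:ℝ) < 2*(w2+1))] at hεB
    nlinarith
  clear_value g ε
  clear hε hg hεA hεB
  rw [mem_interior]
  refine ⟨Ioo (h-ε) (h+ε) ×ˢ Ioo (y-g/2) (y+g/2), ?_, (isOpen_Ioo.prod isOpen_Ioo), ?_⟩
  · rintro ⟨u, v⟩ huv
    simp only [mem_prod, mem_Ioo] at huv
    obtain ⟨⟨hu1, hu2⟩, hv1, hv2⟩ := huv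
    rcases le_or_gt h u with hcase | hcase
    · apply memP_interp hconv hm hM hR hcase (by linarith) hhw
      · nlinarith [mul_nonneg (by linarith : (0:ℝ) ≤ u - h) (by linarith : (0:ℝ) ≤ w2 - (mm - d) + 0),
          mul_le_mul_of_nonneg_right (by linarith : mm - d ≤ w2) (by linarith : (0:ℝ) ≤ u - h),
          mul_le_mul_of_nonneg_left (by linarith : u - h ≤ ε) (by linarith : (0:ℝ) ≤ w2 - (mm - d)),
          mul_lt_mul_of_pos_right (by linarith : mm + g/2 < v) (by linarith : (0:ℝ) < w1 - h)]
      · nlinarith [mul_le_mul_of_nonneg_right (by linarith : d - MM ≤ w2) (by linarith : (0:ℝ) ≤ u - h),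
          mul_le_mul_of_nonneg_left (by linarith : u - h ≤ ε) (by linarith : (0:ℝ) ≤ w2 - (d - MM)),
          mul_lt_mul_of_pos_right (by linarith : v < MM - g/2) (by linarith : (0:ℝ) < w1 - h)]
    · apply memP_interpL hconv hm hM hL (by linarith) hcase.le h0
      · nlinarith [mul_le_mul_of_nonneg_right (by linarith : mm - c ≤ w2) (by linarith : (0:ℝ) ≤ h - u),
          mul_le_mul_of_nonneg_left (by linarith : h - u ≤ ε) (by linarith : (0:ℝ) ≤ w2 - (mm - c)),
          mul_lt_mul_of_pos_right (by linarith : mm + g/2 < v) h0]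
      · nlinarith [mul_le_mul_of_nonneg_right (by linarith : c - MM ≤ w2) (by linarith : (0:ℝ) ≤ h - u),
          mul_le_mul_of_nonneg_left (by linarith : h - u ≤ ε) (by linarith : (0:ℝ) ≤ w2 - (c - MM)),
          mul_lt_mul_of_pos_right (by linarith : v < MM - g/2) h0]
  · constructor
    · simp only [mem_Ioo]; constructor <;> linarith
    · simp only [mem_Ioo]; constructor <;> linarith

set_option maxHeartbeats 1000000 in
/-- a lattice polygon with first width `w₁` (attained in the `x`-direction)
and second width `w₂`, inscribed in the rectangle `[0,w₁] × [0,w₂]` with a vertex on each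
edge, contains at least `min(h, w₁−h) − 1` interior lattice points on the line `x = h`,
for every integer `2 ≤ h ≤ w₁ − 2`. -/
theorem stmt_18 (w1 w2 : ℕ) (P : Set (ℝ × ℝ))
    (hP : ∃ V : Finset (ℝ × ℝ), (V : Set (ℝ × ℝ)) ⊆ latt ∧
      P = convexHull ℝ (V : Set (ℝ × ℝ)))
    (h2d : (interior P).Nonempty)
    (hsub : P ⊆ Set.Icc (0 : ℝ) (w1 : ℝ) ×ˢ Set.Icc (0 : ℝ) (w2 : ℝ))
    (hleft : ∃ p ∈ P, p.1 = 0) (hright : ∃ p ∈ P, p.1 = (w1 : ℝ))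
    (hbot : ∃ p ∈ P, p.2 = 0) (htop : ∃ p ∈ P, p.2 = (w2 : ℝ))
    (hw1 : ∀ u : ℤ × ℤ, u ≠ 0 → ∃ p ∈ P, ∃ q ∈ P,
      (w1 : ℝ) ≤ ((u.1 : ℝ) * p.1 + (u.2 : ℝ) * p.2) - ((u.1 : ℝ) * q.1 + (u.2 : ℝ) * q.2))
    (hw2 : ∀ u : ℤ × ℤ, u.2 ≠ 0 → ∃ p ∈ P, ∃ q ∈ P,
      (w2 : ℝ) ≤ ((u.1 : ℝ) * p.1 + (u.2 : ℝ) * p.2) - ((u.1 : ℝ) * q.1 + (u.2 : ℝ) * q.2))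
    (h : ℕ) (hh : 2 ≤ h) (hh2 : h ≤ w1 - 2) :
    min h (w1 - h) - 1 ≤
      (interior P ∩ {p : ℝ × ℝ | p.1 = (h : ℝ) ∧ ∃ m : ℤ, p.2 = (m : ℝ)}).ncard := by
  classical
  obtain ⟨Vf, hVlat, hPV⟩ := hP
  have hconv : Convex ℝ P := hPV ▸ convex_convexHull ℝ _
  have hclosed : IsClosed P := by rw [hPV]; exact (Vf.finite_toSet.isCompact_convexHull (𝕜 := ℝ)).isClosed
  have hbox : ∀ p ∈ P, 0 ≤ p.1 ∧ p.1 ≤ (w1:ℝ) ∧ 0 ≤ p.2 ∧ p.2 ≤ (w2:ℝ) := by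
    intro p hp
    have := hsub hp
    rw [Set.mem_prod, Set.mem_Icc, Set.mem_Icc] at this
    exact ⟨this.1.1, this.1.2, this.2.1, this.2.2⟩
  have hw1_4 : 4 ≤ w1 := by omega
  have hhw1 : h + 2 ≤ w1 := by omega
  have h0R : (0:ℝ) < (h:ℕ) := by exact_mod_cast Nat.lt_of_lt_of_le (by norm_num) hh
  have hhwR : ((h:ℕ):ℝ) < (w1:ℕ) := by exact_mod_cast Nat.lt_of_lt_of_le (by omega) (le_refl w1)
  have h12 : ((w1:ℕ):ℝ) ≤ (w2:ℕ) := by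
    obtain ⟨pw, hpw, qw, hqw, hww⟩ := hw1 (0,1) (by decide)
    push_cast at hww
    have b1 := (hbox _ hpw).2.2.2
    have b2 := (hbox _ hqw).2.2.1
    linarith
  obtain ⟨Lp, hLp, hL1⟩ := hleft
  obtain ⟨Rp, hRp, hR1⟩ := hright
  obtain ⟨Bp, hBp, hB2⟩ := hbot
  obtain ⟨Tp, hTp, hT2⟩ := htop
  have hL' : (((0:ℝ), Lp.2) : ℝ × ℝ) ∈ P := by
    rwa [show (((0:ℝ), Lp.2) : ℝ × ℝ) = Lp from Prod.ext hL1.symm rfl]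
  have hR' : ((((w1:ℕ):ℝ), Rp.2) : ℝ × ℝ) ∈ P := by
    rwa [show ((((w1:ℕ):ℝ), Rp.2) : ℝ × ℝ) = Rp from Prod.ext hR1.symm rfl]
  have hT' : ((Tp.1, ((w2:ℕ):ℝ)) : ℝ × ℝ) ∈ P := by
    rwa [show ((Tp.1, ((w2:ℕ):ℝ)) : ℝ × ℝ) = Tp from Prod.ext rfl hT2.symm]
  have hB' : ((Bp.1, (0:ℝ)) : ℝ × ℝ) ∈ P := by
    rwa [show ((Bp.1, (0:ℝ)) : ℝ × ℝ) = Bp from Prod.ext rfl hB2.symm]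
  set S : Set ℝ := {y : ℝ | (((h:ℕ):ℝ), y) ∈ P} with hS
  have hSne : S.Nonempty := by
    have hw1pos : (0:ℝ) < (w1:ℕ) := by linarith
    have ha0 : 0 ≤ (((w1:ℕ):ℝ) - h)/w1 := div_nonneg (by linarith) hw1pos.le
    have hb0 : 0 ≤ ((h:ℕ):ℝ)/w1 := div_nonneg h0R.le hw1pos.le
    have hab : (((w1:ℕ):ℝ) - h)/w1 + ((h:ℕ):ℝ)/w1 = 1 := by
      rw [← add_div, div_eq_one_iff_eq hw1pos.ne']; ring
    have hmem := hconv hL' hR' ha0 hb0 hab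
    refine ⟨(((w1:ℕ):ℝ) - h)/w1 * Lp.2 + ((h:ℕ):ℝ)/w1 * Rp.2, ?_⟩
    rw [hS, Set.mem_setOf_eq]
    convert hmem using 1
    refine Prod.ext ?_ rfl
    show ((h:ℕ):ℝ) = (((w1:ℕ):ℝ) - h)/w1 * 0 + ((h:ℕ):ℝ)/w1 * w1
    field_simp
    ring
  have hSbddA : BddAbove S := ⟨((w2:ℕ):ℝ), fun y hy => (hbox _ hy).2.2.2⟩
  have hSbddB : BddBelow S := ⟨0, fun y hy => (hbox _ hy).2.2.1⟩
  have hSclosed : IsClosed S := hclosed.preimage (Continuous.prodMk_right ((h:ℕ):ℝ))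
  set M := sSup S with hMdef
  set m := sInf S with hmdef
  have hMS : M ∈ S := hSclosed.csSup_mem hSne hSbddA
  have hmS : m ∈ S := hSclosed.csInf_mem hSne hSbddB
  have hM_in : ((((h:ℕ):ℝ), M) : ℝ × ℝ) ∈ P := hMS
  have hm_in : ((((h:ℕ):ℝ), m) : ℝ × ℝ) ∈ P := hmS
  have hsl : ∀ p ∈ P, p.1 = ((h:ℕ):ℝ) → m ≤ p.2 ∧ p.2 ≤ M := by
    intro p hp hp1
    have hpS : p.2 ∈ S := by
      rw [hS, Set.mem_setOf_eq]
      rwa [show ((((h:ℕ):ℝ), p.2) : ℝ × ℝ) = p from Prod.ext hp1.symm rfl]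
    exact ⟨csInf_le hSbddB hpS, le_csSup hSbddA hpS⟩
  have hm0 : (0:ℝ) ≤ m := (hbox _ hm_in).2.2.1
  have hM2 : M ≤ ((w2:ℕ):ℝ) := (hbox _ hM_in).2.2.2
  have hmM : m ≤ M := (hsl _ hM_in rfl).1
  obtain ⟨hta0, htaw, -, -⟩ := hbox _ hT'
  obtain ⟨htb0, htbw, -, -⟩ := hbox _ hB'
  obtain ⟨-, -, hc0, hcw⟩ := hbox _ hL'
  obtain ⟨-, -, hd0, hdw⟩ := hbox _ hR'
  have hkey : ((min h (w1 - h) : ℕ) : ℝ) ≤ M - m := by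
    by_contra hcon
    push_neg at hcon
    rw [Nat.cast_min, Nat.cast_sub (by omega : h ≤ w1)] at hcon
    have hsA : M - m < ((h:ℕ):ℝ) := lt_of_lt_of_le hcon (min_le_left _ _)
    have hsB : M - m < ((w1:ℕ):ℝ) - h := lt_of_lt_of_le hcon (min_le_right _ _)
    rcases le_or_gt Tp.1 ((h:ℕ):ℝ) with hta | hta <;>
      rcases le_or_gt Bp.1 ((h:ℕ):ℝ) with htb | htb
    · have hA := caseA hconv hsl hR' hT' hB' hta htb h0R hhwR hta0 htb0 hd0 hdw
      nlinarith
    · obtain ⟨pp, hpp, qq, hqq, hg⟩ := hw2 (1,1) (by decide)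
      push_cast at hg
      exact coreC hconv hbox hsl hL' hR' hT' hB' hta htb.le h0R hhwR h12 hm0 hmM hM2
        ⟨pp, hpp, qq, hqq, by linarith⟩ hsA hsB
    · obtain ⟨pp, hpp, qq, hqq, hg⟩ := hw2 (-1,1) (by decide)
      push_cast at hg
      exact coreD hconv hbox hsl hL' hR' hT' hB' hta.le htb h0R hhwR h12 hm0 hmM hM2
        ⟨pp, hpp, qq, hqq, by linarith⟩ hsA hsB
    · have hB := caseB hconv hsl hL' hT' hB' hta.le htb.le h0R hhwR htaw htbw hc0 hcw
      nlinarith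
  set k := min h (w1 - h) with hk
  have hk2 : 2 ≤ k := by omega
  have hcast : ((k - 1 : ℕ) : ℝ) = (k:ℝ) - 1 := by
    rw [Nat.cast_sub (by omega : 1 ≤ k)]; norm_num
  set F : Finset ℤ := Finset.Icc (⌊m⌋ + 1) (⌊m⌋ + (k - 1 : ℕ)) with hF
  have hinj : Function.Injective (fun j : ℤ => ((((h:ℕ):ℝ), (j:ℝ)) : ℝ × ℝ)) := by
    intro a b hab
    have h2 := congrArg Prod.snd hab
    simp only at h2
    exact_mod_cast h2
  have himg_sub : ↑(F.image (fun j : ℤ => ((((h:ℕ):ℝ), (j:ℝ)) : ℝ × ℝ))) ⊆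
      interior P ∩ {p : ℝ × ℝ | p.1 = (h : ℝ) ∧ ∃ mi : ℤ, p.2 = (mi : ℝ)} := by
    intro x hx
    simp only [Finset.coe_image, Set.mem_image, Finset.mem_coe, hF, Finset.mem_Icc] at hx
    obtain ⟨j, ⟨hj1, hj2⟩, rfl⟩ := hx
    have hmj : m < (j:ℝ) := by
      have h1 := Int.lt_floor_add_one m
      have h2 : ((⌊m⌋ + 1 : ℤ) : ℝ) ≤ (j:ℝ) := by exact_mod_cast hj1
      push_cast at h2
      linarith
    have hjM : (j:ℝ) < M := by
      have h2 : (j:ℝ) ≤ (⌊m⌋:ℝ) + ((k - 1 : ℕ):ℝ) := by exact_mod_cast hj2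
      have h3 : (⌊m⌋:ℝ) ≤ m := Int.floor_le m
      have h4 : ((k:ℕ):ℝ) ≤ M - m := hkey
      rw [hcast] at h2
      linarith
    refine ⟨interior_mem hconv hm_in hM_in hL' hR' h0R hhwR hm0 hM2 hc0 hcw hd0 hdw hmj hjM,
      rfl, ⟨j, rfl⟩⟩
  have hTfin : (interior P ∩ {p : ℝ × ℝ | p.1 = (h : ℝ) ∧ ∃ mi : ℤ, p.2 = (mi : ℝ)}).Finite := by
    apply Set.Finite.subset ((Set.finite_Icc (0:ℤ) (w2:ℤ)).image
      (fun j : ℤ => ((((h:ℕ):ℝ), (j:ℝ)) : ℝ × ℝ)))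
    rintro p ⟨hpint, hp1, j, hp2⟩
    have hpP : p ∈ P := interior_subset hpint
    have hb := hbox _ hpP
    refine ⟨j, ⟨?_, ?_⟩, ?_⟩
    · have := hb.2.2.1; rw [hp2] at this; exact_mod_cast this
    · have := hb.2.2.2; rw [hp2] at this; exact_mod_cast this
    · exact Prod.ext hp1.symm hp2.symm
  have hcard1 : (↑(F.image (fun j : ℤ => ((((h:ℕ):ℝ), (j:ℝ)) : ℝ × ℝ))) : Set (ℝ × ℝ)).ncard
      = k - 1 := by
    rw [Set.ncard_coe_finset, Finset.card_image_of_injective _ hinj, hF, Int.card_Icc]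
    omega
  have hfinal := Set.ncard_le_ncard himg_sub hTfin
  rw [hcard1] at hfinal
  exact hfinal
end
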